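/- arXiv:1812.10079 — 2 statements merged into one kernel-verified Lean document; each statement's English description precedes it below -/
import Mathlib

section
/- Let {X_i}_{i∈I} be a family of Banach spaces each having property (μ^s), and let 1 < p < ∞. Then (⊕_{i∈I} X_i)_{ℓᵖ} has property (μ^s). -/
open Filter Topology MeasureTheory Pointwise ENNReal

noncomputable section

/-- A subset of a real normed space is *weakly compact* if it is compact in the weak topology. -/
def WeaklyCompact {X : Type*} [NormedAddCommGroup X] [NormedSpace ℝ X] (W : Set X) : Prop :=
  IsCompact (toWeakSpace ℝ X '' W)

/-- A sequence in the dual is weak*-null. -/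
def WeakStarNull {X : Type*} [NormedAddCommGroup X] [NormedSpace ℝ X]
    (f : ℕ → StrongDual ℝ X) : Prop :=
  ∀ x : X, Tendsto (fun n => f n x) atTop (𝓝 0)

/-- Convergence to `0` in the Mackey topology `μ(X*,X)`: uniform convergence to `0`
on every weakly compact subset of `X`. -/
def MackeyNull {X : Type*} [NormedAddCommGroup X] [NormedSpace ℝ X]
    (f : ℕ → StrongDual ℝ X) : Prop :=
  ∀ W : Set X, WeaklyCompact W → TendstoUniformlyOn (fun n x => f n x) 0 atTop W

/-- The sequence of Cesàro (arithmetic) means of `f` converges to `0` in the Mackey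
topology `μ(X*,X)`. -/
def CesaroMackeyNull {X : Type*} [NormedAddCommGroup X] [NormedSpace ℝ X]
    (f : ℕ → StrongDual ℝ X) : Prop :=
  ∀ W : Set X, WeaklyCompact W →
    TendstoUniformlyOn (fun N : ℕ => fun x => (N : ℝ)⁻¹ • ∑ n ∈ Finset.range N, f n x) 0 atTop W

/-- Property (μ^s): every weak*-null sequence in `X*` admits a subsequence all of whose
further subsequences are Cesàro convergent to `0` with respect to the Mackey topology. -/
def PropMuS (X : Type*) [NormedAddCommGroup X] [NormedSpace ℝ X] : Prop :=
  ∀ f : ℕ → StrongDual ℝ X, WeakStarNull f →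
    ∃ φ : ℕ → ℕ, StrictMono φ ∧ ∀ ψ : ℕ → ℕ, StrictMono ψ →
      CesaroMackeyNull (fun k => f (φ (ψ k)))


open NormedSpace

section AuxGeneric

variable {X : Type*} [NormedAddCommGroup X] [NormedSpace ℝ X]

lemma WeaklyCompact.exists_bound {W : Set X} (hW : WeaklyCompact W) :
    ∃ M : ℝ, 0 ≤ M ∧ ∀ x ∈ W, ‖x‖ ≤ M := by
  have key : ∀ g : StrongDual ℝ X, ∃ C, ∀ x : W, ‖inclusionInDoubleDual ℝ X (x : X) g‖ ≤ C := by
    intro g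
    have hg : Continuous fun w : WeakSpace ℝ X => (topDualPairing ℝ X).flip w g :=
      WeakBilin.eval_continuous _ g
    obtain ⟨C, hC⟩ := (hW.image hg).isBounded.exists_norm_le
    exact ⟨C, fun x => hC _ ⟨toWeakSpace ℝ X (x : X), Set.mem_image_of_mem _ x.2, rfl⟩⟩
  obtain ⟨C', hC'⟩ :=
    banach_steinhaus (g := fun x : W => inclusionInDoubleDual ℝ X (x : X)) key
  refine ⟨max C' 0, le_max_right _ _, fun x hx => ?_⟩
  calc ‖x‖ = ‖inclusionInDoubleDual ℝ X x‖ :=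
        ((inclusionInDoubleDualLi ℝ (E := X)).norm_map x).symm
    _ ≤ C' := hC' ⟨x, hx⟩
    _ ≤ max C' 0 := le_max_left _ _

lemma WeakStarNull.exists_bound [CompleteSpace X] {f : ℕ → StrongDual ℝ X} (hf : WeakStarNull f) :
    ∃ C : ℝ, 0 ≤ C ∧ ∀ n, ‖f n‖ ≤ C := by
  have key : ∀ x : X, ∃ C, ∀ n, ‖f n x‖ ≤ C := by
    intro x
    have h1 : Tendsto (fun n => ‖f n x‖) atTop (𝓝 ‖(0 : ℝ)‖) := (hf x).norm
    obtain ⟨C, hC⟩ := h1.bddAbove_range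
    exact ⟨C, fun n => hC (Set.mem_range_self n)⟩
  obtain ⟨C', hC'⟩ := banach_steinhaus (g := f) key
  exact ⟨max C' 0, le_max_right _ _, fun n => (hC' n).trans (le_max_left _ _)⟩

lemma WeaklyCompact.image_clm {Y : Type*} [NormedAddCommGroup Y] [NormedSpace ℝ Y]
    {W : Set X} (hW : WeaklyCompact W) (T : X →L[ℝ] Y) : WeaklyCompact (T '' W) := by
  have heq : toWeakSpace ℝ Y '' (T '' W) = (WeakSpace.map T) '' (toWeakSpace ℝ X '' W) := by
    rw [Set.image_image, Set.image_image]
    rfl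
  rw [WeaklyCompact, heq]
  exact hW.image (WeakSpace.map T).continuous

end AuxGeneric

section Prefixx

variable {Y : Type*} [NormedAddCommGroup Y] [NormedSpace ℝ Y]

lemma tendsto_inv_nat_mul_const (c : ℝ) :
    Tendsto (fun N : ℕ => (N : ℝ)⁻¹ * c) atTop (𝓝 0) := by
  simpa using tendsto_inv_atTop_nhds_zero_nat.mul_const c

lemma abs_inv_nat_mul_const_eventually_lt {c ε : ℝ} (hε : 0 < ε) :
    ∀ᶠ N : ℕ in atTop, |(N : ℝ)⁻¹ * c| < ε := by
  have h0 := Metric.tendsto_nhds.mp (tendsto_inv_nat_mul_const c) ε hε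
  exact h0.mono fun N hN => by rw [Real.dist_eq, sub_zero] at hN; exact hN

lemma cesaroMackeyNull_of_shift {g : ℕ → StrongDual ℝ Y} {C : ℝ}
    (hC : ∀ k, ‖g k‖ ≤ C) (m : ℕ)
    (h : CesaroMackeyNull (fun j => g (j + m))) : CesaroMackeyNull g := by
  intro W hW
  obtain ⟨M, hM0, hM⟩ := hW.exists_bound
  have hsh := h W hW
  rw [Metric.tendstoUniformlyOn_iff] at hsh ⊢
  intro ε hε
  obtain ⟨N1, hN1⟩ := (Filter.eventually_atTop).1 (hsh (ε / 2) (by linarith))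
  have h0 := abs_inv_nat_mul_const_eventually_lt (c := (m : ℝ) * C * M) (by linarith : (0:ℝ) < ε/2)
  filter_upwards [h0, Filter.eventually_ge_atTop (m + max N1 1)] with N hNa hNb x hx
  -- notation
  have hCnn : 0 ≤ C := le_trans (norm_nonneg _) (hC 0)
  have hxM : ‖x‖ ≤ M := hM x hx
  have hmN : m ≤ N := le_trans (Nat.le_add_right _ _) hNb
  set n := N - m with hn
  have hNmn : N = m + n := by omega
  have hnN1 : N1 ≤ n := by omega
  have hn1 : 1 ≤ n := by omega
  -- split the sum
  have hsplit : ∑ k ∈ Finset.range N, g k x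
      = (∑ k ∈ Finset.range m, g k x) + ∑ j ∈ Finset.range n, g (j + m) x := by
    rw [hNmn]
    rw [Finset.sum_range_add]
    congr 1
    exact Finset.sum_congr rfl fun j _ => by rw [Nat.add_comm m j]
  have hS1 : |∑ k ∈ Finset.range m, g k x| ≤ (m : ℝ) * C * M := by
    calc |∑ k ∈ Finset.range m, g k x| ≤ ∑ k ∈ Finset.range m, |g k x| :=
          Finset.abs_sum_le_sum_abs _ _
      _ ≤ ∑ k ∈ Finset.range m, C * M := by
          refine Finset.sum_le_sum fun k _ => ?_
          calc |g k x| ≤ ‖g k‖ * ‖x‖ := (g k).le_opNorm x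
            _ ≤ C * M := mul_le_mul (hC k) hxM (norm_nonneg _) hCnn
      _ = (m : ℝ) * C * M := by simp [mul_assoc]
  have hS2 : |(n : ℝ)⁻¹ • ∑ j ∈ Finset.range n, g (j + m) x| < ε / 2 := by
    have := hN1 n hnN1 x hx
    simpa [Real.dist_eq] using this
  have hNpos : (0 : ℝ) < N := by
    have : (1 : ℕ) ≤ N := by omega
    exact_mod_cast Nat.lt_of_lt_of_le Nat.zero_lt_one this
  have key : |(N : ℝ)⁻¹ • ∑ k ∈ Finset.range N, g k x| < ε := by
    rw [hsplit, smul_eq_mul, mul_add]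
    have hb : |(N:ℝ)⁻¹ * ∑ j ∈ Finset.range n, g (j + m) x| < ε / 2 := by
      have hrel : (N:ℝ)⁻¹ * ∑ j ∈ Finset.range n, g (j + m) x
          = ((n : ℝ) / N) * ((n : ℝ)⁻¹ * ∑ j ∈ Finset.range n, g (j + m) x) := by
        field_simp
      rw [hrel, abs_mul]
      have hfrac0 : 0 ≤ (n : ℝ) / N := by positivity
      have hfrac1 : (n : ℝ) / N ≤ 1 := by
        rw [div_le_one hNpos]
        exact_mod_cast (by omega : n ≤ N)
      have habs : |(n : ℝ) / N| ≤ 1 := by rwa [abs_of_nonneg hfrac0]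
      calc |(n : ℝ) / N| * |(n : ℝ)⁻¹ * ∑ j ∈ Finset.range n, g (j + m) x|
          ≤ 1 * |(n : ℝ)⁻¹ * ∑ j ∈ Finset.range n, g (j + m) x| :=
            mul_le_mul_of_nonneg_right habs (abs_nonneg _)
        _ = |(n : ℝ)⁻¹ • ∑ j ∈ Finset.range n, g (j + m) x| := by rw [one_mul, smul_eq_mul]
        _ < ε / 2 := hS2
    have ha : |(N:ℝ)⁻¹ * ∑ k ∈ Finset.range m, g k x| < ε / 2 := by
      calc |(N:ℝ)⁻¹ * ∑ k ∈ Finset.range m, g k x| = (N:ℝ)⁻¹ * |∑ k ∈ Finset.range m, g k x| := by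
            rw [abs_mul, abs_of_nonneg (by positivity : (0:ℝ) ≤ (N:ℝ)⁻¹)]
        _ ≤ (N:ℝ)⁻¹ * ((m : ℝ) * C * M) := by
            exact mul_le_mul_of_nonneg_left hS1 (by positivity)
        _ ≤ |(N:ℝ)⁻¹ * ((m : ℝ) * C * M)| := le_abs_self _
        _ < ε / 2 := hNa
    calc |(N:ℝ)⁻¹ * ∑ k ∈ Finset.range m, g k x + (N:ℝ)⁻¹ * ∑ j ∈ Finset.range n, g (j + m) x|
        ≤ |(N:ℝ)⁻¹ * ∑ k ∈ Finset.range m, g k x| + |(N:ℝ)⁻¹ * ∑ j ∈ Finset.range n, g (j + m) x| :=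
          abs_add_le _ _
      _ < ε / 2 + ε / 2 := add_lt_add ha hb
      _ = ε := by ring
  simpa [Real.dist_eq] using key

end Prefixx

section AuxLp

variable {I : Type} {E : I → Type} [∀ i, NormedAddCommGroup (E i)] [∀ i, NormedSpace ℝ (E i)]
variable {p : ℝ≥0∞} [Fact (1 ≤ p)]

lemma lp.single_add' [DecidableEq I] (i : I) (a b : E i) :
    lp.single p i (a + b) = lp.single p i a + lp.single p i b := by
  apply lp.ext
  funext j
  by_cases hj : j = i
  · subst hj
    simp only [lp.coeFn_add, Pi.add_apply, lp.single_apply_self]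
  · simp only [lp.coeFn_add, Pi.add_apply, lp.single_apply_ne p i _ hj, add_zero]

lemma lp.norm_single' [DecidableEq I] (hp : 0 < p.toReal) (i : I) (a : E i) :
    ‖lp.single p i a‖ = ‖a‖ := by
  exact lp.norm_single (E := E) (ENNReal.toReal_pos_iff.mp hp).1 i a

/-- `lp.single` as a continuous linear map. -/
def lpSingleCLM [DecidableEq I] (hp : 0 < p.toReal) (i : I) : E i →L[ℝ] lp E p :=
  LinearMap.mkContinuous
    { toFun := fun a => lp.single p i a
      map_add' := fun a b => lp.single_add' i a b
      map_smul' := fun c a => by simpa using lp.single_smul p i a c }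
    1 (fun a => by show ‖lp.single p i a‖ ≤ 1 * ‖a‖; rw [lp.norm_single' hp i a, one_mul])

@[simp] lemma lpSingleCLM_apply [DecidableEq I] (hp : 0 < p.toReal) (i : I) (a : E i) :
    lpSingleCLM (E := E) hp i a = lp.single p i a := rfl

lemma norm_lpSingleCLM_le [DecidableEq I] (hp : 0 < p.toReal) (i : I) :
    ‖lpSingleCLM (E := E) hp i‖ ≤ 1 :=
  LinearMap.mkContinuous_norm_le _ zero_le_one _

/-- Coordinate projection as a continuous linear map. -/
def lpProjCLM (hp : p ≠ 0) (i : I) : lp E p →L[ℝ] E i :=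
  LinearMap.mkContinuous
    { toFun := fun x => x i
      map_add' := fun x y => by simp [lp.coeFn_add]
      map_smul' := fun c x => by simp [lp.coeFn_smul] }
    1 (fun x => by show ‖(x : ∀ i, E i) i‖ ≤ 1 * ‖x‖; rw [one_mul]; exact lp.norm_apply_le_norm hp x i)

@[simp] lemma lpProjCLM_apply (hp : p ≠ 0) (i : I) (x : lp E p) :
    lpProjCLM (E := E) hp i x = x i := rfl

lemma norm_coord_le [DecidableEq I] (hp : 0 < p.toReal) (f : StrongDual ℝ (lp E p)) (i : I) :
    ‖f.comp (lpSingleCLM (E := E) hp i)‖ ≤ ‖f‖ := by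
  calc ‖f.comp (lpSingleCLM (E := E) hp i)‖ ≤ ‖f‖ * ‖lpSingleCLM (E := E) hp i‖ :=
        ContinuousLinearMap.opNorm_comp_le _ _
    _ ≤ ‖f‖ * 1 := mul_le_mul_of_nonneg_left (norm_lpSingleCLM_le hp i) (norm_nonneg f)
    _ = ‖f‖ := mul_one _

lemma hasSum_coord [DecidableEq I] (hp : 0 < p.toReal) (hpt : p ≠ ⊤)
    (f : StrongDual ℝ (lp E p)) (x : lp E p) :
    HasSum (fun i => f.comp (lpSingleCLM (E := E) hp i) (x i)) (f x) :=
  (lp.hasSum_single hpt x).mapL f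

end AuxLp

section KeyBound

variable {I : Type} {E : I → Type} [∀ i, NormedAddCommGroup (E i)] [∀ i, NormedSpace ℝ (E i)]
variable {p : ℝ≥0∞} [Fact (1 ≤ p)]

lemma rpow_sub_one_mul_self {Q : ℝ} (hQ0 : 0 < Q) (hQ1 : 1 < Q) {u : ℝ} (hu : 0 ≤ u) :
    u ^ (Q - 1) * u = u ^ Q := by
  rcases eq_or_lt_of_le hu with h0 | h0
  · rw [← h0, Real.zero_rpow (by linarith : Q - 1 ≠ 0), Real.zero_rpow hQ0.ne', zero_mul]
  · calc u ^ (Q - 1) * u = u ^ (Q - 1) * u ^ (1 : ℝ) := by rw [Real.rpow_one]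
      _ = u ^ (Q - 1 + 1) := (Real.rpow_add h0 _ _).symm
      _ = u ^ Q := by ring_nf

set_option maxHeartbeats 1000000 in
lemma coord_sum_rpow_le [DecidableEq I] (hp : 0 < p.toReal) {Q : ℝ}
    (hpq : p.toReal.HolderConjugate Q) (f : StrongDual ℝ (lp E p)) (F : Finset I) :
    ∑ i ∈ F, ‖f.comp (lpSingleCLM (E := E) hp i)‖ ^ Q ≤ ‖f‖ ^ Q := by
  set P := p.toReal with hPdef
  set σ : I → ℝ := fun i => ‖f.comp (lpSingleCLM (E := E) hp i)‖ with hσ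
  have hσnn : ∀ i, 0 ≤ σ i := fun i => norm_nonneg _
  have hQ1 : 1 < Q := hpq.symm.lt
  have hQ0 : 0 < Q := lt_trans zero_lt_one hQ1
  have hP0 : 0 < P := hpq.pos
  have hsum_nn : 0 ≤ ∑ i ∈ F, σ i ^ Q :=
    Finset.sum_nonneg fun i _ => Real.rpow_nonneg (hσnn i) _
  have main : ∀ ε : ℝ, 0 < ε →
      (∑ i ∈ F, σ i ^ Q) ^ (1/Q) ≤ ‖f‖ + ε * ((F.card : ℝ) + 1) ^ (1/Q) := by
    intro ε hε
    have hexists : ∀ i : I, ∃ y : E i, ‖y‖ ≤ 1 ∧ σ i - ε ≤ (f.comp (lpSingleCLM (E := E) hp i)) y := by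
      intro i
      by_cases hcase : σ i - ε < 0
      · exact ⟨0, by simp, by rw [map_zero]; linarith⟩
      · obtain ⟨y, hy1, hy2⟩ := (f.comp (lpSingleCLM (E := E) hp i)).exists_lt_apply_of_lt_opNorm
            (r := σ i - ε) (by show σ i - ε < σ i; linarith)
        rcases le_or_gt 0 ((f.comp (lpSingleCLM (E := E) hp i)) y) with hpos | hneg
        · refine ⟨y, hy1.le, ?_⟩
          rw [Real.norm_eq_abs, abs_of_nonneg hpos] at hy2
          linarith
        · refine ⟨-y, by simpa using hy1.le, ?_⟩
          rw [map_neg]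
          rw [Real.norm_eq_abs, abs_of_neg hneg] at hy2
          linarith
    choose y hy1 hy2 using hexists
    set s : I → ℝ := fun i => max ((f.comp (lpSingleCLM (E := E) hp i)) (y i)) 0 with hs
    have hsnn : ∀ i, 0 ≤ s i := fun i => le_max_right _ _
    have hσs : ∀ i, σ i ≤ s i + ε := fun i => by
      have h1 := hy2 i
      have h2 : (f.comp (lpSingleCLM (E := E) hp i)) (y i) ≤ s i := le_max_left _ 0
      linarith
    set t : I → ℝ := fun i => s i ^ (Q - 1) with ht
    have htnn : ∀ i, 0 ≤ t i := fun i => Real.rpow_nonneg (hsnn i) _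
    set x : lp E p := ∑ i ∈ F, lp.single p i (t i • y i) with hx
    have hfx : f x = ∑ i ∈ F, s i ^ Q := by
      rw [hx, map_sum]
      refine Finset.sum_congr rfl fun i _ => ?_
      have h1 : f (lp.single p i (t i • y i)) = t i * (f.comp (lpSingleCLM (E := E) hp i)) (y i) := by
        rw [lp.single_smul]
        have : f ((t i) • lp.single p i (y i)) = (t i) • f (lp.single p i (y i)) := map_smul f _ _
        rw [this, smul_eq_mul]
        rfl
      rw [h1]
      rcases le_or_gt ((f.comp (lpSingleCLM (E := E) hp i)) (y i)) 0 with hle | hlt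
      · have hsi : s i = 0 := max_eq_right hle
        have hti : t i = 0 := by
          show s i ^ (Q - 1) = 0
          rw [hsi]; exact Real.zero_rpow (by linarith)
        rw [hti, hsi, zero_mul, Real.zero_rpow hQ0.ne']
      · have hsi : s i = (f.comp (lpSingleCLM (E := E) hp i)) (y i) := max_eq_left hlt.le
        rw [← hsi]
        exact rpow_sub_one_mul_self hQ0 hQ1 (hsnn i)
    have hxnorm_pow : ‖x‖ ^ P ≤ ∑ i ∈ F, s i ^ Q := by
      have h1 : ‖x‖ ^ P = ∑ i ∈ F, ‖t i • y i‖ ^ P := by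
        rw [hx]
        exact lp.norm_sum_single hp (fun i => t i • y i) F
      rw [h1]
      refine Finset.sum_le_sum fun i _ => ?_
      have h2 : ‖t i • y i‖ ≤ t i := by
        rw [norm_smul, Real.norm_eq_abs, abs_of_nonneg (htnn i)]
        calc t i * ‖y i‖ ≤ t i * 1 := mul_le_mul_of_nonneg_left (hy1 i) (htnn i)
          _ = t i := mul_one _
      calc ‖t i • y i‖ ^ P ≤ t i ^ P := Real.rpow_le_rpow (norm_nonneg _) h2 hP0.le
        _ = (s i ^ (Q - 1)) ^ P := rfl
        _ = s i ^ ((Q - 1) * P) := (Real.rpow_mul (hsnn i) _ _).symm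
        _ = s i ^ Q := by rw [hpq.symm.sub_one_mul_conj]
    set T := ∑ i ∈ F, s i ^ Q with hT
    have hTnn : 0 ≤ T := Finset.sum_nonneg fun i _ => Real.rpow_nonneg (hsnn i) _
    have hxnorm : ‖x‖ ≤ T ^ (1/P) := by
      have h1 : ‖x‖ = (‖x‖ ^ P) ^ (1/P) := by
        rw [one_div, Real.rpow_rpow_inv (norm_nonneg _) hP0.ne']
      rw [h1]
      exact Real.rpow_le_rpow (Real.rpow_nonneg (norm_nonneg _) _) hxnorm_pow (by positivity)
    have hTle : T ≤ ‖f‖ * T ^ (1/P) := by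
      calc T = f x := hfx.symm
        _ ≤ |f x| := le_abs_self _
        _ = ‖f x‖ := (Real.norm_eq_abs _).symm
        _ ≤ ‖f‖ * ‖x‖ := f.le_opNorm x
        _ ≤ ‖f‖ * T ^ (1/P) := mul_le_mul_of_nonneg_left hxnorm (norm_nonneg f)
    have hT1Q : T ^ (1/Q) ≤ ‖f‖ := by
      rcases eq_or_lt_of_le hTnn with h0 | h0
      · rw [← h0, Real.zero_rpow (by positivity : (1:ℝ)/Q ≠ 0)]
        exact norm_nonneg f
      · have hTP : 0 < T ^ (1/P) := Real.rpow_pos_of_pos h0 _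
        have hdiv : T ^ (1/Q) = T / T ^ (1/P) := by
          have h1q : (1:ℝ)/Q = 1 - 1/P := by
            have := Real.HolderConjugate.inv_add_inv_eq_one hpq
            rw [one_div, one_div]
            linarith
          rw [h1q, Real.rpow_sub h0, Real.rpow_one]
        rw [hdiv, div_le_iff₀ hTP]
        exact hTle.trans (le_of_eq rfl)
    have hmink : (∑ i ∈ F, σ i ^ Q) ^ (1/Q) ≤ T ^ (1/Q) + ε * ((F.card : ℝ) + 1) ^ (1/Q) := by
      have h1 : (∑ i ∈ F, σ i ^ Q) ^ (1/Q) ≤ (∑ i ∈ F, (s i + ε) ^ Q) ^ (1/Q) := by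
        refine Real.rpow_le_rpow hsum_nn
          (Finset.sum_le_sum fun i _ => Real.rpow_le_rpow (hσnn i) (hσs i) hQ0.le) (by positivity)
      have h2 := Real.Lp_add_le F s (fun _ => ε) hQ1.le
      have h3 : ∀ i ∈ F, |s i + ε| ^ Q = (s i + ε) ^ Q := fun i _ => by
        rw [abs_of_nonneg (by have := hsnn i; linarith)]
      have h4 : ∀ i ∈ F, |s i| ^ Q = s i ^ Q := fun i _ => by rw [abs_of_nonneg (hsnn i)]
      have h5 : ∀ i ∈ F, |ε| ^ Q = ε ^ Q := fun i _ => by rw [abs_of_nonneg hε.le]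
      rw [Finset.sum_congr rfl h3, Finset.sum_congr rfl h4, Finset.sum_congr rfl h5] at h2
      have h6 : (∑ _i ∈ F, ε ^ Q) ^ (1/Q) ≤ ε * ((F.card : ℝ) + 1) ^ (1/Q) := by
        rw [Finset.sum_const, nsmul_eq_mul]
        calc ((F.card : ℝ) * ε ^ Q) ^ (1/Q) ≤ (((F.card : ℝ) + 1) * ε ^ Q) ^ (1/Q) := by
              refine Real.rpow_le_rpow (by positivity) ?_ (by positivity)
              have : (F.card : ℝ) ≤ (F.card : ℝ) + 1 := by linarith
              exact mul_le_mul_of_nonneg_right this (by positivity)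
          _ = ((F.card : ℝ) + 1) ^ (1/Q) * (ε ^ Q) ^ (1/Q) :=
              Real.mul_rpow (by positivity) (by positivity)
          _ = ε * ((F.card : ℝ) + 1) ^ (1/Q) := by
              rw [one_div, Real.rpow_rpow_inv hε.le hQ0.ne', mul_comm]
      calc (∑ i ∈ F, σ i ^ Q) ^ (1/Q) ≤ (∑ i ∈ F, (s i + ε) ^ Q) ^ (1/Q) := h1
        _ ≤ (∑ i ∈ F, s i ^ Q) ^ (1/Q) + (∑ _i ∈ F, ε ^ Q) ^ (1/Q) := h2
        _ ≤ T ^ (1/Q) + ε * ((F.card : ℝ) + 1) ^ (1/Q) := by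
            refine add_le_add (le_of_eq rfl) h6
    calc (∑ i ∈ F, σ i ^ Q) ^ (1/Q) ≤ T ^ (1/Q) + ε * ((F.card : ℝ) + 1) ^ (1/Q) := hmink
      _ ≤ ‖f‖ + ε * ((F.card : ℝ) + 1) ^ (1/Q) := by
          exact add_le_add hT1Q (le_of_eq rfl)
  have hfin : (∑ i ∈ F, σ i ^ Q) ^ (1/Q) ≤ ‖f‖ := by
    by_contra hlt
    push_neg at hlt
    set c := ((F.card : ℝ) + 1) ^ ((1:ℝ)/Q) with hc
    have hcpos : 0 < c := Real.rpow_pos_of_pos (by positivity) _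
    set δ := (∑ i ∈ F, σ i ^ Q) ^ ((1:ℝ)/Q) - ‖f‖ with hδ
    have hδpos : 0 < δ := by rw [hδ]; linarith
    have h := main (δ / (2 * c)) (by positivity)
    have heq : δ / (2 * c) * c = δ / 2 := by field_simp
    rw [heq] at h
    rw [hδ] at h
    linarith
  have hfinal := Real.rpow_le_rpow (Real.rpow_nonneg hsum_nn _) hfin hQ0.le
  rwa [one_div, Real.rpow_inv_rpow hsum_nn hQ0.ne'] at hfinal

end KeyBound

section LqToolkit

variable {I : Type}

/-- Splitting a tsum at a finite set, using `if` rather than subtypes. -/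
lemma tsum_split_finset [DecidableEq I] {g : I → ℝ} (hg : Summable g) (F : Finset I) :
    ∑' i, g i = (∑ i ∈ F, g i) + ∑' i, (if i ∈ F then 0 else g i) := by
  have h1 : Summable (fun i => if i ∈ F then g i else 0) :=
    summable_of_ne_finset_zero (s := F) (fun i hi => if_neg hi)
  have h2 : Summable (fun i => if i ∈ F then 0 else g i) := by
    have heq : (fun i => if i ∈ F then 0 else g i)
        = fun i => g i - (if i ∈ F then g i else 0) := by
      funext i; by_cases h : i ∈ F <;> simp [h]
    rw [heq]
    exact hg.sub h1
  have h3 : ∀ i, g i = (if i ∈ F then g i else 0) + (if i ∈ F then 0 else g i) := by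
    intro i; by_cases h : i ∈ F <;> simp [h]
  calc ∑' i, g i = ∑' i, ((if i ∈ F then g i else 0) + (if i ∈ F then 0 else g i)) :=
        tsum_congr h3
    _ = (∑' i, (if i ∈ F then g i else 0)) + ∑' i, (if i ∈ F then 0 else g i) :=
        Summable.tsum_add h1 h2
    _ = (∑ i ∈ F, g i) + ∑' i, (if i ∈ F then 0 else g i) := by
        have h8 : ∑' i, (if i ∈ F then g i else 0) = ∑ i ∈ F, (if i ∈ F then g i else 0) :=
          tsum_eq_sum (fun i hi => if_neg hi)
        rw [h8]
        congr 1
        exact Finset.sum_congr rfl fun i hi => if_pos hi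

/-- Choice of a finite set making the tail of a summable nonnegative series small. -/
lemma exists_tail_small [DecidableEq I] {g : I → ℝ} (hg : Summable g) (hnn : ∀ i, 0 ≤ g i) (F0 : Finset I)
    {δ : ℝ} (hδ : 0 < δ) :
    ∃ F : Finset I, F0 ⊆ F ∧ ∑' i, (if i ∈ F then 0 else g i) ≤ δ := by
  have h2 : Tendsto (fun F : Finset I => ∑ i ∈ F, g i) atTop (𝓝 (∑' i, g i)) :=
    hg.hasSum
  have h3 := Metric.tendsto_nhds.mp h2 δ hδ
  obtain ⟨F1, hF1⟩ := Filter.eventually_atTop.mp h3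
  refine ⟨F0 ∪ F1, Finset.subset_union_left, ?_⟩
  have h4 := hF1 (F0 ∪ F1) Finset.subset_union_right
  have h5 := tsum_split_finset hg (F0 ∪ F1)
  have h6 : |∑' i, g i - ∑ i ∈ F0 ∪ F1, g i| < δ := by
    rw [Real.dist_eq, abs_sub_comm] at h4; exact h4
  have h7 : ∑' i, (if i ∈ F0 ∪ F1 then 0 else g i) = ∑' i, g i - ∑ i ∈ F0 ∪ F1, g i := by
    linarith
  rw [h7]
  have := le_abs_self (∑' i, g i - ∑ i ∈ F0 ∪ F1, g i)
  calc ∑' i, g i - ∑ i ∈ F0 ∪ F1, g i ≤ |∑' i, g i - ∑ i ∈ F0 ∪ F1, g i| := this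
    _ ≤ δ := (le_of_lt h6)

variable {Q : ℝ}

/-- Binary Minkowski inequality for `ℓ^Q`-type tsums over an arbitrary index. -/
lemma lq_add (hQ : 1 ≤ Q) {u v : I → ℝ}
    (hu : Summable fun i => |u i| ^ Q) (hv : Summable fun i => |v i| ^ Q) :
    Summable (fun i => |u i + v i| ^ Q) ∧
      (∑' i, |u i + v i| ^ Q) ^ (1/Q) ≤
        (∑' i, |u i| ^ Q) ^ (1/Q) + (∑' i, |v i| ^ Q) ^ (1/Q) := by
  have hQ0 : 0 < Q := lt_of_lt_of_le zero_lt_one hQ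
  have habs : ∀ i, |u i| ≥ 0 := fun i => abs_nonneg _
  obtain ⟨hsum, hle⟩ := Real.Lp_add_le_tsum_of_nonneg hQ
    (f := fun i => |u i|) (g := fun i => |v i|) (fun i => abs_nonneg _) (fun i => abs_nonneg _)
    hu hv
  have hptwise : ∀ i, |u i + v i| ^ Q ≤ (|u i| + |v i|) ^ Q := fun i =>
    Real.rpow_le_rpow (abs_nonneg _) (abs_add_le _ _) hQ0.le
  have hsum' : Summable (fun i => |u i + v i| ^ Q) :=
    Summable.of_nonneg_of_le (fun i => Real.rpow_nonneg (abs_nonneg _) _) hptwise hsum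
  refine ⟨hsum', ?_⟩
  calc (∑' i, |u i + v i| ^ Q) ^ (1/Q)
      ≤ (∑' i, (|u i| + |v i|) ^ Q) ^ (1/Q) := by
        refine Real.rpow_le_rpow ?_ (Summable.tsum_le_tsum hptwise hsum' hsum) (by positivity)
        exact tsum_nonneg fun i => Real.rpow_nonneg (abs_nonneg _) _
    _ ≤ (∑' i, |u i| ^ Q) ^ (1/Q) + (∑' i, |v i| ^ Q) ^ (1/Q) := hle

/-- Finite Minkowski (triangle) inequality for `ℓ^Q`-type tsums. -/
lemma lq_finsum (hQ : 1 ≤ Q) (u : ℕ → I → ℝ)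
    (hu : ∀ k, Summable fun i => |u k i| ^ Q) (N : ℕ) :
    Summable (fun i => |∑ k ∈ Finset.range N, u k i| ^ Q) ∧
      (∑' i, |∑ k ∈ Finset.range N, u k i| ^ Q) ^ (1/Q) ≤
        ∑ k ∈ Finset.range N, (∑' i, |u k i| ^ Q) ^ (1/Q) := by
  have hQ0 : 0 < Q := lt_of_lt_of_le zero_lt_one hQ
  induction N with
  | zero =>
      have hz : (fun i : I => |∑ k ∈ Finset.range 0, u k i| ^ Q) = fun _ => 0 := by
        funext i; simp [Real.zero_rpow hQ0.ne']
      constructor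
      · rw [hz]; exact summable_zero
      · rw [hz, tsum_zero, Real.zero_rpow (by positivity : (1:ℝ)/Q ≠ 0)]
        simp
  | succ n ih =>
      obtain ⟨ihs, ihle⟩ := ih
      have hsplit : ∀ i, ∑ k ∈ Finset.range (n+1), u k i
          = (∑ k ∈ Finset.range n, u k i) + u n i := fun i => Finset.sum_range_succ _ _
      obtain ⟨hs2, hle2⟩ := lq_add hQ (u := fun i => ∑ k ∈ Finset.range n, u k i)
        (v := fun i => u n i) ihs (hu n)
      constructor
      · refine Summable.congr hs2 fun i => by rw [hsplit i]
      · calc (∑' i, |∑ k ∈ Finset.range (n+1), u k i| ^ Q) ^ (1/Q)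
            = (∑' i, |(∑ k ∈ Finset.range n, u k i) + u n i| ^ Q) ^ (1/Q) := by
              congr 1; exact tsum_congr fun i => by rw [hsplit i]
          _ ≤ (∑' i, |∑ k ∈ Finset.range n, u k i| ^ Q) ^ (1/Q)
                + (∑' i, |u n i| ^ Q) ^ (1/Q) := hle2
          _ ≤ (∑ k ∈ Finset.range n, (∑' i, |u k i| ^ Q) ^ (1/Q))
                + (∑' i, |u n i| ^ Q) ^ (1/Q) := add_le_add ihle (le_refl _)
          _ = ∑ k ∈ Finset.range (n+1), (∑' i, |u k i| ^ Q) ^ (1/Q) :=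
              (Finset.sum_range_succ _ _).symm

/-- Pulling a nonnegative scalar out of an `ℓ^Q`-type tsum. -/
lemma lq_smul (hQ : 1 ≤ Q) {c : ℝ} (hc : 0 ≤ c) (u : I → ℝ) :
    (∑' i, |c * u i| ^ Q) ^ (1/Q) = c * (∑' i, |u i| ^ Q) ^ (1/Q) := by
  have hQ0 : 0 < Q := lt_of_lt_of_le zero_lt_one hQ
  have h1 : ∀ i, |c * u i| ^ Q = c ^ Q * |u i| ^ Q := fun i => by
    rw [abs_mul, abs_of_nonneg hc, Real.mul_rpow hc (abs_nonneg _)]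
  rw [tsum_congr h1, tsum_mul_left]
  rw [Real.mul_rpow (by positivity) (tsum_nonneg fun i => Real.rpow_nonneg (abs_nonneg _) _)]
  rw [one_div, Real.rpow_rpow_inv hc hQ0.ne']

end LqToolkit

section GlidingHump

variable {I : Type} [DecidableEq I]

lemma lq_smul_summable {Q : ℝ} (c : ℝ) {u : I → ℝ} (hu : Summable fun i => |u i| ^ Q) :
    Summable fun i => |c * u i| ^ Q := by
  have h : (fun i => |c * u i| ^ Q) = fun i => |c| ^ Q * |u i| ^ Q := funext fun i => by
    rw [abs_mul, Real.mul_rpow (abs_nonneg _) (abs_nonneg _)]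
  rw [h]
  exact hu.mul_left _

set_option maxHeartbeats 2000000 in
lemma gliding_hump {Q : ℝ} (hQ1 : 1 < Q) {err : ℕ → I → ℝ} {D : ℝ} (hD : 0 ≤ D)
    (hsum : ∀ k, Summable fun i => |err k i| ^ Q)
    (hbdd : ∀ k, ∑' i, |err k i| ^ Q ≤ D)
    (hnull : ∀ i, Tendsto (fun k => err k i) atTop (𝓝 0)) :
    ∃ χ : ℕ → ℕ, StrictMono χ ∧ ∀ ψ : ℕ → ℕ, StrictMono ψ →
      Tendsto (fun N : ℕ =>
        (∑' i, |(N:ℝ)⁻¹ * ∑ k ∈ Finset.range N, err (χ (ψ k)) i| ^ Q) ^ (1/Q))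
        atTop (𝓝 0) := by
  have hQ0 : 0 < Q := lt_trans zero_lt_one hQ1
  have hQ : 1 ≤ Q := hQ1.le
  set εs : ℕ → ℝ := fun k => ((2:ℝ)⁻¹ ^ k) ^ Q with hεs
  have hεpos : ∀ k, 0 < εs k := fun k => Real.rpow_pos_of_pos (by positivity) _
  have step : ∀ (n0 : ℕ) (F0 : Finset I) (k : ℕ), ∃ n1 : ℕ, ∃ F1 : Finset I,
      n0 < n1 ∧ F0 ⊆ F1 ∧ (∑ i ∈ F0, |err n1 i| ^ Q) ≤ εs k ∧
      (∑' i, (if i ∈ F1 then 0 else |err n1 i| ^ Q)) ≤ εs k := by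
    intro n0 F0 k
    have hconv : Tendsto (fun n => ∑ i ∈ F0, |err n i| ^ Q) atTop (𝓝 0) := by
      have h : ∀ i ∈ F0, Tendsto (fun n => |err n i| ^ Q) atTop (𝓝 0) := by
        intro i _
        have h1 : Tendsto (fun n => |err n i|) atTop (𝓝 (0:ℝ)) := by
          simpa using (hnull i).abs
        have h2 : Tendsto (fun n => |err n i| ^ Q) atTop (𝓝 ((0:ℝ) ^ Q)) :=
          h1.rpow_const (Or.inr hQ0.le)
        simpa [Real.zero_rpow hQ0.ne'] using h2
      simpa using tendsto_finset_sum F0 h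
    have hev : ∀ᶠ n in atTop, (∑ i ∈ F0, |err n i| ^ Q) ≤ εs k := by
      have h := Metric.tendsto_nhds.mp hconv (εs k) (hεpos k)
      exact h.mono fun n hn => by
        rw [Real.dist_eq, sub_zero] at hn
        exact le_of_lt (lt_of_le_of_lt (le_abs_self _) hn)
    obtain ⟨n1, hn1⟩ := (hev.and (Filter.eventually_gt_atTop n0)).exists
    obtain ⟨F1, hF1a, hF1b⟩ := exists_tail_small (hsum n1)
      (fun i => Real.rpow_nonneg (abs_nonneg _) _) F0 (hεpos k)
    exact ⟨n1, F1, hn1.2, hF1a, hn1.1, hF1b⟩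
  choose nf Ff hlt hsub hhead htail using step
  set seq : ℕ → ℕ × Finset I := fun k => Nat.rec (nf 0 ∅ 0, Ff 0 ∅ 0)
    (fun k ih => (nf ih.1 ih.2 (k+1), Ff ih.1 ih.2 (k+1))) k with hseq
  set χ : ℕ → ℕ := fun k => (seq k).1 with hχ
  set Fs : ℕ → Finset I := fun k => (seq k).2 with hFs
  have hχe : ∀ k, χ (k+1) = nf (χ k) (Fs k) (k+1) := fun k => rfl
  have hFse : ∀ k, Fs (k+1) = Ff (χ k) (Fs k) (k+1) := fun k => rfl
  have hχmono : StrictMono χ := by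
    apply strictMono_nat_of_lt_succ
    intro k
    have h := hlt (χ k) (Fs k) (k+1)
    rw [← hχe k] at h
    exact h
  have hFsmono : ∀ j m : ℕ, j ≤ m → Fs j ⊆ Fs m := by
    have h1 : ∀ k, Fs k ⊆ Fs (k+1) := by
      intro k
      have h := hsub (χ k) (Fs k) (k+1)
      rw [← hFse k] at h
      exact h
    intro j m hjm
    induction m with
    | zero => simp at hjm; subst hjm; exact Finset.Subset.refl _
    | succ n ih =>
        rcases Nat.lt_or_ge j (n+1) with hlt' | hge
        · exact (ih (by omega)).trans (h1 n)
        · have : j = n + 1 := by omega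
          subst this; exact Finset.Subset.refl _
  have hhead' : ∀ k, (∑ i ∈ Fs k, |err (χ (k+1)) i| ^ Q) ≤ εs (k+1) := by
    intro k
    have h := hhead (χ k) (Fs k) (k+1)
    rw [← hχe k] at h
    exact h
  have htail' : ∀ k, (∑' i, (if i ∈ Fs k then 0 else |err (χ k) i| ^ Q)) ≤ εs k := by
    intro k
    cases k with
    | zero => exact htail 0 ∅ 0
    | succ n =>
        have h := htail (χ n) (Fs n) (n+1)
        rw [← hχe n, ← hFse n] at h
        exact h
  -- the disjointly-supported part and the remainder
  classical
  set dd : ℕ → I → ℝ := fun m i =>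
    if i ∈ Fs m ∧ (m = 0 ∨ i ∉ Fs (m-1)) then err (χ m) i else 0 with hdd
  set rr : ℕ → I → ℝ := fun m i => err (χ m) i - dd m i with hrr
  have herr_eq : ∀ m i, err (χ m) i = dd m i + rr m i := fun m i => by rw [hrr]; ring
  have hdd_abs : ∀ m i, |dd m i| ≤ |err (χ m) i| := by
    intro m i
    rw [hdd]
    by_cases h : i ∈ Fs m ∧ (m = 0 ∨ i ∉ Fs (m-1)) <;> simp [h]
  have hrr_abs : ∀ m i, |rr m i| ≤ |err (χ m) i| := by
    intro m i
    rw [hrr, hdd]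
    by_cases h : i ∈ Fs m ∧ (m = 0 ∨ i ∉ Fs (m-1)) <;> simp [h]
  have hdd_sum : ∀ m, Summable fun i => |dd m i| ^ Q := fun m =>
    Summable.of_nonneg_of_le (fun i => Real.rpow_nonneg (abs_nonneg _) _)
      (fun i => Real.rpow_le_rpow (abs_nonneg _) (hdd_abs m i) hQ0.le) (hsum (χ m))
  have hrr_sum : ∀ m, Summable fun i => |rr m i| ^ Q := fun m =>
    Summable.of_nonneg_of_le (fun i => Real.rpow_nonneg (abs_nonneg _) _)
      (fun i => Real.rpow_le_rpow (abs_nonneg _) (hrr_abs m i) hQ0.le) (hsum (χ m))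
  have hdd_bdd : ∀ m, ∑' i, |dd m i| ^ Q ≤ D := fun m =>
    le_trans (Summable.tsum_le_tsum (fun i => Real.rpow_le_rpow (abs_nonneg _) (hdd_abs m i) hQ0.le)
      (hdd_sum m) (hsum (χ m))) (hbdd (χ m))
  have hdisj : ∀ m m' : ℕ, m < m' → ∀ i, dd m i ≠ 0 → dd m' i = 0 := by
    intro m m' hmm' i hne
    have h1 : i ∈ Fs m := by
      by_contra hns
      apply hne
      rw [hdd]
      simp [hns]
    have h2 : i ∈ Fs (m' - 1) := hFsmono m (m' - 1) (by omega) h1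
    rw [hdd]
    have : ¬ (i ∈ Fs m' ∧ (m' = 0 ∨ i ∉ Fs (m' - 1))) := by
      rintro ⟨-, h3 | h3⟩
      · omega
      · exact h3 h2
    simp [this]
  -- ℓ^Q bound for the remainder
  have hrr_lq : ∀ m, (∑' i, |rr m i| ^ Q) ≤ 2 * εs m := by
    intro m
    have hptw : ∀ i, |rr m i| ^ Q ≤
        (if i ∈ Fs m then 0 else |err (χ m) i| ^ Q)
        + (if m ≠ 0 ∧ i ∈ Fs (m-1) then |err (χ m) i| ^ Q else 0) := by
      intro i
      by_cases h : i ∈ Fs m ∧ (m = 0 ∨ i ∉ Fs (m-1))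
      · have : rr m i = 0 := by rw [hrr, hdd]; simp [h]
        rw [this]
        have h0 : |(0:ℝ)| ^ Q = 0 := by rw [abs_zero, Real.zero_rpow hQ0.ne']
        rw [h0]
        have hb1 : (0:ℝ) ≤ if i ∈ Fs m then 0 else |err (χ m) i| ^ Q := by
          by_cases hc : i ∈ Fs m <;> simp [hc, Real.rpow_nonneg (abs_nonneg _)]
        have hb2 : (0:ℝ) ≤ if m ≠ 0 ∧ i ∈ Fs (m-1) then |err (χ m) i| ^ Q else 0 := by
          by_cases hc : m ≠ 0 ∧ i ∈ Fs (m-1) <;> simp [hc, Real.rpow_nonneg (abs_nonneg _)]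
        linarith
      · have hre : rr m i = err (χ m) i := by rw [hrr, hdd]; simp [h]
        rw [hre]
        push_neg at h
        by_cases hm : i ∈ Fs m
        · have h4 := h hm
          have h5 : m ≠ 0 ∧ i ∈ Fs (m-1) := ⟨h4.1, h4.2⟩
          rw [if_pos h5, if_pos hm]
          simp
        · rw [if_neg hm]
          have hb2 : (0:ℝ) ≤ if m ≠ 0 ∧ i ∈ Fs (m-1) then |err (χ m) i| ^ Q else 0 := by
            by_cases hc : m ≠ 0 ∧ i ∈ Fs (m-1) <;> simp [hc, Real.rpow_nonneg (abs_nonneg _)]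
          linarith
    have hs1 : Summable (fun i => if i ∈ Fs m then 0 else |err (χ m) i| ^ Q) := by
      refine Summable.of_nonneg_of_le ?_ ?_ (hsum (χ m))
      · intro i; by_cases hc : i ∈ Fs m <;> simp [hc, Real.rpow_nonneg (abs_nonneg _)]
      · intro i; by_cases hc : i ∈ Fs m <;> simp [hc, Real.rpow_nonneg (abs_nonneg _)]
    have hs2 : Summable (fun i => if m ≠ 0 ∧ i ∈ Fs (m-1) then |err (χ m) i| ^ Q else 0) := by
      apply summable_of_ne_finset_zero (s := Fs (m-1))
      intro i hi
      have : ¬ (m ≠ 0 ∧ i ∈ Fs (m-1)) := fun hc => hi hc.2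
      rw [if_neg this]
    have ht1 : ∑' i, (if i ∈ Fs m then 0 else |err (χ m) i| ^ Q) ≤ εs m := htail' m
    have ht2 : ∑' i, (if m ≠ 0 ∧ i ∈ Fs (m-1) then |err (χ m) i| ^ Q else 0) ≤ εs m := by
      rcases Nat.eq_zero_or_pos m with hm0 | hmpos
      · subst hm0
        have hz : (fun i => if (0:ℕ) ≠ 0 ∧ i ∈ Fs (0-1) then |err (χ 0) i| ^ Q else 0)
            = fun _ => (0:ℝ) := by
          funext i; simp
        rw [hz, tsum_zero]
        exact (hεpos 0).le
      · obtain ⟨n, rfl⟩ : ∃ n, m = n + 1 := ⟨m - 1, by omega⟩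
        have he : ∑' i, (if (n+1:ℕ) ≠ 0 ∧ i ∈ Fs (n+1-1) then |err (χ (n+1)) i| ^ Q else 0)
            = ∑ i ∈ Fs n, (if (n+1:ℕ) ≠ 0 ∧ i ∈ Fs (n+1-1) then |err (χ (n+1)) i| ^ Q else 0) := by
          apply tsum_eq_sum
          intro i hi
          have : ¬ ((n+1:ℕ) ≠ 0 ∧ i ∈ Fs (n+1-1)) := by
            rintro ⟨-, hc⟩
            simp at hc
            exact hi hc
          rw [if_neg this]
        rw [he]
        calc ∑ i ∈ Fs n, (if (n+1:ℕ) ≠ 0 ∧ i ∈ Fs (n+1-1) then |err (χ (n+1)) i| ^ Q else 0)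
            ≤ ∑ i ∈ Fs n, |err (χ (n+1)) i| ^ Q := by
              refine Finset.sum_le_sum fun i hi => ?_
              by_cases hc : (n+1:ℕ) ≠ 0 ∧ i ∈ Fs (n+1-1)
              · rw [if_pos hc]
              · rw [if_neg hc]; exact Real.rpow_nonneg (abs_nonneg _) _
          _ ≤ εs (n+1) := hhead' n
    calc ∑' i, |rr m i| ^ Q
        ≤ ∑' i, ((if i ∈ Fs m then 0 else |err (χ m) i| ^ Q)
            + (if m ≠ 0 ∧ i ∈ Fs (m-1) then |err (χ m) i| ^ Q else 0)) :=
          Summable.tsum_le_tsum hptw (hrr_sum m) (hs1.add hs2)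
      _ = (∑' i, (if i ∈ Fs m then 0 else |err (χ m) i| ^ Q))
            + ∑' i, (if m ≠ 0 ∧ i ∈ Fs (m-1) then |err (χ m) i| ^ Q else 0) := Summable.tsum_add hs1 hs2
      _ ≤ εs m + εs m := add_le_add ht1 ht2
      _ = 2 * εs m := by ring
  refine ⟨χ, hχmono, ?_⟩
  intro ψ hψ
  have hddψ : ∀ k : ℕ, Summable fun i => |dd (ψ k) i| ^ Q := fun k => hdd_sum (ψ k)
  have hrrψ : ∀ k : ℕ, Summable fun i => |rr (ψ k) i| ^ Q := fun k => hrr_sum (ψ k)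
  have hUsum : ∀ N, Summable fun i => |∑ k ∈ Finset.range N, dd (ψ k) i| ^ Q :=
    fun N => (lq_finsum hQ (fun k i => dd (ψ k) i) hddψ N).1
  have hVsum : ∀ N, Summable fun i => |∑ k ∈ Finset.range N, rr (ψ k) i| ^ Q :=
    fun N => (lq_finsum hQ (fun k i => rr (ψ k) i) hrrψ N).1
  set G : ℕ → ℝ := fun N =>
    (∑' i, |(N:ℝ)⁻¹ * ∑ k ∈ Finset.range N, err (χ (ψ k)) i| ^ Q) ^ (1/Q) with hG
  have hGnn : ∀ N, 0 ≤ G N := fun N =>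
    Real.rpow_nonneg (tsum_nonneg fun i => Real.rpow_nonneg (abs_nonneg _) _) _
  set bound : ℕ → ℝ := fun N => D ^ ((1:ℝ)/Q) * ((N:ℝ)⁻¹) ^ ((Q-1)/Q) + 4 * (N:ℝ)⁻¹
    with hbound
  have hGb : ∀ N, G N ≤ bound N := by
    intro N
    rcases Nat.eq_zero_or_pos N with h0 | hNpos
    · subst h0
      have hz1 : G 0 = 0 := by
        have hz : (fun i : I => |((0:ℕ):ℝ)⁻¹ * ∑ k ∈ Finset.range 0, err (χ (ψ k)) i| ^ Q)
            = fun _ => (0:ℝ) := by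
          funext i; simp [Real.zero_rpow hQ0.ne']
        show (∑' i : I, |((0:ℕ):ℝ)⁻¹ * ∑ k ∈ Finset.range 0, err (χ (ψ k)) i| ^ Q) ^ (1/Q) = 0
        rw [hz, tsum_zero, Real.zero_rpow (by positivity : (1:ℝ)/Q ≠ 0)]
      have hz2 : bound 0 = 0 := by
        rw [hbound]
        simp [Real.zero_rpow (ne_of_gt (div_pos (by linarith : (0:ℝ) < Q - 1) hQ0))]
      rw [hz1, hz2]
    · have hNR : (0:ℝ) < (N:ℝ) := by exact_mod_cast hNpos
      have hNinv : (0:ℝ) ≤ (N:ℝ)⁻¹ := by positivity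
      have hdecomp : ∀ i, (N:ℝ)⁻¹ * ∑ k ∈ Finset.range N, err (χ (ψ k)) i
          = (N:ℝ)⁻¹ * (∑ k ∈ Finset.range N, dd (ψ k) i)
            + (N:ℝ)⁻¹ * (∑ k ∈ Finset.range N, rr (ψ k) i) := by
        intro i
        rw [← mul_add, ← Finset.sum_add_distrib]
        congr 1
        exact Finset.sum_congr rfl fun k _ => herr_eq (ψ k) i
      have hU' : Summable fun i => |(N:ℝ)⁻¹ * ∑ k ∈ Finset.range N, dd (ψ k) i| ^ Q :=
        lq_smul_summable _ (hUsum N)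
      have hV' : Summable fun i => |(N:ℝ)⁻¹ * ∑ k ∈ Finset.range N, rr (ψ k) i| ^ Q :=
        lq_smul_summable _ (hVsum N)
      obtain ⟨-, htri⟩ := lq_add hQ
        (u := fun i => (N:ℝ)⁻¹ * ∑ k ∈ Finset.range N, dd (ψ k) i)
        (v := fun i => (N:ℝ)⁻¹ * ∑ k ∈ Finset.range N, rr (ψ k) i) hU' hV'
      have hGsplit : G N ≤
          (∑' i, |(N:ℝ)⁻¹ * ∑ k ∈ Finset.range N, dd (ψ k) i| ^ Q) ^ (1/Q)
          + (∑' i, |(N:ℝ)⁻¹ * ∑ k ∈ Finset.range N, rr (ψ k) i| ^ Q) ^ (1/Q) := by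
        have hcong : (∑' i, |(N:ℝ)⁻¹ * ∑ k ∈ Finset.range N, err (χ (ψ k)) i| ^ Q)
            = ∑' i, |((N:ℝ)⁻¹ * ∑ k ∈ Finset.range N, dd (ψ k) i)
              + ((N:ℝ)⁻¹ * ∑ k ∈ Finset.range N, rr (ψ k) i)| ^ Q :=
          tsum_congr fun i => by rw [hdecomp i]
        show (∑' i, |(N:ℝ)⁻¹ * ∑ k ∈ Finset.range N, err (χ (ψ k)) i| ^ Q) ^ (1/Q) ≤ _
        rw [hcong]
        exact htri
      have hUpoint : ∀ i, |∑ k ∈ Finset.range N, dd (ψ k) i| ^ Q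
          ≤ ∑ k ∈ Finset.range N, |dd (ψ k) i| ^ Q := by
        intro i
        by_cases hex : ∃ k ∈ Finset.range N, dd (ψ k) i ≠ 0
        · obtain ⟨k0, hk0mem, hk0⟩ := hex
          have hzero : ∀ b ∈ Finset.range N, b ≠ k0 → dd (ψ b) i = 0 := by
            intro b hb hbne
            rcases Nat.lt_or_ge b k0 with hbk | hbk
            · by_contra hbne0
              exact hk0 (hdisj (ψ b) (ψ k0) (hψ hbk) i hbne0)
            · have hk0b : k0 < b := by omega
              exact hdisj (ψ k0) (ψ b) (hψ hk0b) i hk0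
          have hsum_eq : ∑ k ∈ Finset.range N, dd (ψ k) i = dd (ψ k0) i :=
            Finset.sum_eq_single_of_mem k0 hk0mem hzero
          rw [hsum_eq]
          exact Finset.single_le_sum (f := fun k => |dd (ψ k) i| ^ Q)
            (fun k _ => Real.rpow_nonneg (abs_nonneg _) _) hk0mem
        · push_neg at hex
          have hz : ∑ k ∈ Finset.range N, dd (ψ k) i = 0 :=
            Finset.sum_eq_zero fun k hk => hex k hk
          rw [hz, abs_zero, Real.zero_rpow hQ0.ne']
          exact Finset.sum_nonneg fun k _ => Real.rpow_nonneg (abs_nonneg _) _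
      have hUtsum : (∑' i, |∑ k ∈ Finset.range N, dd (ψ k) i| ^ Q) ≤ (N:ℝ) * D := by
        have hRHSsum : Summable fun i => ∑ k ∈ Finset.range N, |dd (ψ k) i| ^ Q :=
          summable_sum fun k _ => hddψ k
        have h1 := Summable.tsum_le_tsum hUpoint (hUsum N) hRHSsum
        have h2 : ∑' i, ∑ k ∈ Finset.range N, |dd (ψ k) i| ^ Q
            = ∑ k ∈ Finset.range N, ∑' i, |dd (ψ k) i| ^ Q :=
          (hasSum_sum (fun k _ => (hddψ k).hasSum)).tsum_eq
        rw [h2] at h1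
        calc (∑' i, |∑ k ∈ Finset.range N, dd (ψ k) i| ^ Q)
            ≤ ∑ k ∈ Finset.range N, ∑' i, |dd (ψ k) i| ^ Q := h1
          _ ≤ ∑ _k ∈ Finset.range N, D := Finset.sum_le_sum fun k _ => hdd_bdd (ψ k)
          _ = (N:ℝ) * D := by rw [Finset.sum_const, Finset.card_range, nsmul_eq_mul]
      have hUbound : (∑' i, |(N:ℝ)⁻¹ * ∑ k ∈ Finset.range N, dd (ψ k) i| ^ Q) ^ (1/Q)
          ≤ D ^ ((1:ℝ)/Q) * ((N:ℝ)⁻¹) ^ ((Q-1)/Q) := by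
        rw [lq_smul hQ hNinv]
        have h3 : (∑' i, |∑ k ∈ Finset.range N, dd (ψ k) i| ^ Q) ^ (1/Q)
            ≤ ((N:ℝ) * D) ^ ((1:ℝ)/Q) :=
          Real.rpow_le_rpow (tsum_nonneg fun i => Real.rpow_nonneg (abs_nonneg _) _)
            hUtsum (by positivity)
        have hqq : (Q-1)/Q = 1 - 1/Q := by rw [sub_div, div_self hQ0.ne']
        have h4 : (N:ℝ)⁻¹ * ((N:ℝ) * D) ^ ((1:ℝ)/Q)
            = D ^ ((1:ℝ)/Q) * ((N:ℝ)⁻¹) ^ ((Q-1)/Q) := by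
          have e1 : ((N:ℝ) * D) ^ ((1:ℝ)/Q) = (N:ℝ) ^ ((1:ℝ)/Q) * D ^ ((1:ℝ)/Q) :=
            Real.mul_rpow hNR.le hD
          have e2 : ((N:ℝ)⁻¹) ^ ((Q-1)/Q) = (N:ℝ) ^ (-((Q-1)/Q)) := by
            rw [Real.inv_rpow hNR.le, ← Real.rpow_neg hNR.le]
          have e3 : (N:ℝ)⁻¹ * (N:ℝ) ^ ((1:ℝ)/Q) = (N:ℝ) ^ (-((Q-1)/Q)) := by
            rw [← Real.rpow_neg_one (N:ℝ), ← Real.rpow_add hNR]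
            congr 1
            rw [hqq]
            ring
          rw [e1, ← mul_assoc, e3, e2]
          exact mul_comm _ _
        calc (N:ℝ)⁻¹ * (∑' i, |∑ k ∈ Finset.range N, dd (ψ k) i| ^ Q) ^ (1/Q)
            ≤ (N:ℝ)⁻¹ * ((N:ℝ) * D) ^ ((1:ℝ)/Q) := mul_le_mul_of_nonneg_left h3 hNinv
          _ = D ^ ((1:ℝ)/Q) * ((N:ℝ)⁻¹) ^ ((Q-1)/Q) := h4
      obtain ⟨-, hVtri⟩ := lq_finsum hQ (fun k i => rr (ψ k) i) hrrψ N
      have hVbound : (∑' i, |(N:ℝ)⁻¹ * ∑ k ∈ Finset.range N, rr (ψ k) i| ^ Q) ^ (1/Q)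
          ≤ 4 * (N:ℝ)⁻¹ := by
        rw [lq_smul hQ hNinv]
        have h5 : ∀ k : ℕ, (∑' i, |rr (ψ k) i| ^ Q) ^ (1/Q) ≤ 2 * (2:ℝ)⁻¹ ^ k := by
          intro k
          have h6 : (∑' i, |rr (ψ k) i| ^ Q) ^ (1/Q) ≤ (2 * εs (ψ k)) ^ ((1:ℝ)/Q) :=
            Real.rpow_le_rpow (tsum_nonneg fun i => Real.rpow_nonneg (abs_nonneg _) _)
              (hrr_lq (ψ k)) (by positivity)
          have h7 : (2 * εs (ψ k)) ^ ((1:ℝ)/Q) = 2 ^ ((1:ℝ)/Q) * (2:ℝ)⁻¹ ^ (ψ k) := by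
            rw [hεs]
            rw [Real.mul_rpow (by norm_num) (Real.rpow_nonneg (by positivity) _)]
            congr 1
            rw [one_div, Real.rpow_rpow_inv (by positivity) hQ0.ne']
          have h8 : (2:ℝ) ^ ((1:ℝ)/Q) ≤ 2 := by
            have h8a : (1:ℝ)/Q ≤ 1 := by
              rw [div_le_one hQ0]; exact hQ
            have h8b := Real.rpow_le_rpow_of_exponent_le (by norm_num : (1:ℝ) ≤ 2) h8a
            rwa [Real.rpow_one] at h8b
          have h9 : (2:ℝ)⁻¹ ^ (ψ k) ≤ (2:ℝ)⁻¹ ^ k :=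
            pow_le_pow_of_le_one (by norm_num) (by norm_num) hψ.le_apply
          calc (∑' i, |rr (ψ k) i| ^ Q) ^ (1/Q) ≤ (2 * εs (ψ k)) ^ ((1:ℝ)/Q) := h6
            _ = 2 ^ ((1:ℝ)/Q) * (2:ℝ)⁻¹ ^ (ψ k) := h7
            _ ≤ 2 * (2:ℝ)⁻¹ ^ k := mul_le_mul h8 h9 (by positivity) (by norm_num)
        have h10 : ∑ k ∈ Finset.range N, (∑' i, |rr (ψ k) i| ^ Q) ^ (1/Q) ≤ 4 := by
          calc ∑ k ∈ Finset.range N, (∑' i, |rr (ψ k) i| ^ Q) ^ (1/Q)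
              ≤ ∑ k ∈ Finset.range N, 2 * (2:ℝ)⁻¹ ^ k := Finset.sum_le_sum fun k _ => h5 k
            _ = 2 * ∑ k ∈ Finset.range N, (2:ℝ)⁻¹ ^ k := by rw [Finset.mul_sum]
            _ ≤ 2 * 2 := by
                have h11 : ∑ k ∈ Finset.range N, (2:ℝ)⁻¹ ^ k ≤ 2 := by
                  have h12 := sum_geometric_two_le N
                  simpa [one_div] using h12
                linarith
            _ = 4 := by norm_num
        calc (N:ℝ)⁻¹ * (∑' i, |∑ k ∈ Finset.range N, rr (ψ k) i| ^ Q) ^ (1/Q)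
            ≤ (N:ℝ)⁻¹ * ∑ k ∈ Finset.range N, (∑' i, |rr (ψ k) i| ^ Q) ^ (1/Q) :=
              mul_le_mul_of_nonneg_left hVtri hNinv
          _ ≤ (N:ℝ)⁻¹ * 4 := mul_le_mul_of_nonneg_left h10 hNinv
          _ = 4 * (N:ℝ)⁻¹ := mul_comm _ _
      calc G N ≤ (∑' i, |(N:ℝ)⁻¹ * ∑ k ∈ Finset.range N, dd (ψ k) i| ^ Q) ^ (1/Q)
            + (∑' i, |(N:ℝ)⁻¹ * ∑ k ∈ Finset.range N, rr (ψ k) i| ^ Q) ^ (1/Q) := hGsplit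
        _ ≤ bound N := by
            rw [hbound]
            exact add_le_add hUbound hVbound
  have hbound0 : Tendsto bound atTop (𝓝 0) := by
    have hb1 : Tendsto (fun N : ℕ => ((N:ℝ)⁻¹) ^ ((Q-1)/Q)) atTop (𝓝 0) := by
      have h1 : Tendsto (fun N : ℕ => (N:ℝ)⁻¹) atTop (𝓝 (0:ℝ)) :=
        tendsto_inv_atTop_nhds_zero_nat
      have h2 : Tendsto (fun N : ℕ => ((N:ℝ)⁻¹) ^ ((Q-1)/Q))
          atTop (𝓝 ((0:ℝ) ^ ((Q-1)/Q))) :=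
        h1.rpow_const (Or.inr (div_nonneg (by linarith) hQ0.le))
      rwa [Real.zero_rpow (ne_of_gt (div_pos (by linarith) hQ0))] at h2
    have hb2 : Tendsto (fun N : ℕ => (N:ℝ)⁻¹) atTop (𝓝 (0:ℝ)) :=
      tendsto_inv_atTop_nhds_zero_nat
    have h13 := (hb1.const_mul (D ^ ((1:ℝ)/Q))).add (hb2.const_mul 4)
    rw [hbound]
    simpa using h13
  exact squeeze_zero hGnn hGb hbound0

end GlidingHump

lemma cesaroMackeyNull_zero {Y : Type*} [NormedAddCommGroup Y] [NormedSpace ℝ Y] :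
    CesaroMackeyNull (fun _ : ℕ => (0 : StrongDual ℝ Y)) := by
  intro W hW
  rw [Metric.tendstoUniformlyOn_iff]
  intro ε hε
  refine Filter.Eventually.of_forall fun N x _ => ?_
  simpa using hε

set_option maxHeartbeats 4000000 in
/-- The `ℓᵖ`-sum, `1 < p < ∞`, of any family of Banach spaces with property (μ^s) has
property (μ^s). -/
theorem stmt13 {I : Type} {E : I → Type} [∀ i, NormedAddCommGroup (E i)]
    [∀ i, NormedSpace ℝ (E i)] [∀ i, CompleteSpace (E i)]
    (p : ℝ≥0∞) [Fact (1 ≤ p)] (hp1 : 1 < p) (hpt : p < ⊤)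
    (h : ∀ i, PropMuS (E i)) : PropMuS (lp E p) := by
  classical
  intro f hf
  have hp0 : p ≠ 0 := (lt_trans zero_lt_one hp1).ne'
  have hptop : p ≠ ⊤ := hpt.ne
  have hP1 : 1 < p.toReal := by
    have h1 := (ENNReal.toReal_lt_toReal (by simp : (1:ℝ≥0∞) ≠ ⊤) hptop).mpr hp1
    simpa using h1
  have hPpos : 0 < p.toReal := lt_trans zero_lt_one hP1
  have hpq : (p.toReal).HolderConjugate (Real.conjExponent p.toReal) :=
    Real.HolderConjugate.conjExponent hP1
  set P := p.toReal with hPdef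
  set Q := Real.conjExponent p.toReal with hQdef
  have hQ1 : 1 < Q := hpq.symm.lt
  have hQ0 : 0 < Q := lt_trans zero_lt_one hQ1
  obtain ⟨C, hC0, hCb⟩ := hf.exists_bound
  set c : ℕ → ∀ i, StrongDual ℝ (E i) :=
    fun n i => (f n).comp (lpSingleCLM (E := E) hPpos i) with hc
  set σ : ℕ → I → ℝ := fun n i => ‖c n i‖ with hσ
  have hσnn : ∀ n i, 0 ≤ σ n i := fun n i => norm_nonneg _
  have hσC : ∀ n i, σ n i ≤ C := fun n i =>
    le_trans (norm_coord_le hPpos (f n) i) (hCb n)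
  have hcoord_sum : ∀ n (F : Finset I), ∑ i ∈ F, σ n i ^ Q ≤ C ^ Q := fun n F =>
    le_trans (coord_sum_rpow_le hPpos hpq (f n) F)
      (Real.rpow_le_rpow (norm_nonneg _) (hCb n) hQ0.le)
  have hσsummable : ∀ n, Summable fun i => σ n i ^ Q := fun n =>
    summable_of_sum_le (fun i => Real.rpow_nonneg (hσnn n i) _) (hcoord_sum n)
  have hσtsum : ∀ n, ∑' i, σ n i ^ Q ≤ C ^ Q := fun n =>
    le_of_tendsto' (hσsummable n).hasSum (fun s => hcoord_sum n s)
  have hcnorm : ∀ n i, ‖c n i‖ ≤ C := fun n i => hσC n i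
  have hcoordnull : ∀ i, WeakStarNull (fun n => c n i) := fun i y => hf (lp.single p i y)
  have hfval : ∀ n (x : lp E p), HasSum (fun i => c n i (x i)) (f n x) :=
    fun n x => hasSum_coord hPpos hptop (f n) x
  -- countable support
  set Jset : Set I := ⋃ n, Function.support (σ n) with hJ
  have hJc : Jset.Countable := by
    refine Set.countable_iUnion fun n => ?_
    have h1 : Summable (fun i => (⟨σ n i ^ Q, Real.rpow_nonneg (hσnn n i) _⟩ : NNReal)) := by
      exact NNReal.summable_coe.mp (hσsummable n)
    have h2 := h1.countable_support_nnreal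
    have h3 : Function.support (fun i => (⟨σ n i ^ Q, Real.rpow_nonneg (hσnn n i) _⟩ : NNReal))
        = Function.support (σ n) := by
      ext i
      simp only [Function.mem_support, Ne]
      constructor
      · intro hi hgi
        refine hi ?_
        ext : 1
        simpa [hgi] using Real.zero_rpow hQ0.ne'
      · intro hi hgi
        apply hi
        have h4 : σ n i ^ Q = 0 := congrArg NNReal.toReal hgi
        exact (Real.rpow_eq_zero (hσnn n i) hQ0.ne').mp h4
    rw [← h3]; exact h2
  have hoff : ∀ i, i ∉ Jset → ∀ n, c n i = 0 := by
    intro i hi n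
    have h1 : σ n i = 0 := by
      by_contra h2
      exact hi (Set.mem_iUnion.mpr ⟨n, h2⟩)
    exact norm_eq_zero.mp h1
  rcases Set.eq_empty_or_nonempty Jset with hJe | hJne
  · -- trivial case: all functionals vanish
    refine ⟨id, strictMono_id, fun ψ hψ => ?_⟩
    have hz : ∀ n, f n = 0 := by
      intro n
      apply ContinuousLinearMap.ext
      intro x
      have h1 : ∀ i, c n i (x i) = 0 := by
        intro i
        have h2 : c n i = 0 := hoff i (by rw [hJe]; exact Set.notMem_empty i) n
        rw [h2]; rfl
      have h3 := (hfval n x)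
      have h4 : HasSum (fun i => c n i (x i)) 0 := by
        have : (fun i => c n i (x i)) = fun _ => (0:ℝ) := funext h1
        rw [this]; exact hasSum_zero
      have := h3.unique h4
      simpa using this
    have hzz : (fun k => f (id (ψ k))) = fun _ => (0 : StrongDual ℝ (lp E p)) := by
      funext k; exact hz _
    rw [hzz]
    exact cesaroMackeyNull_zero
  -- main case
  obtain ⟨e, hJrange⟩ := Set.Countable.exists_eq_range hJc hJne
  -- one diagonalization step
  have step : ∀ s : ℕ → ℕ, StrictMono s → ∀ m : ℕ, ∃ φ' : ℕ → ℕ, StrictMono φ' ∧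
      ((∃ α : ℝ, Tendsto (fun k => σ (s (φ' k)) (e m)) atTop (𝓝 α)) ∧
       (∀ ψ : ℕ → ℕ, StrictMono ψ → CesaroMackeyNull fun k => c (s (φ' (ψ k))) (e m))) := by
    intro s hs m
    have hbdd : ∀ k, σ (s k) (e m) ∈ Set.Icc (0:ℝ) C := fun k => ⟨hσnn _ _, hσC _ _⟩
    obtain ⟨α, -, φ1, hφ1, hconv⟩ := (isCompact_Icc (a := (0:ℝ)) (b := C)).tendsto_subseq hbdd
    have hwsn : WeakStarNull (fun k => c (s (φ1 k)) (e m)) := fun y =>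
      (hcoordnull (e m) y).comp (hs.comp hφ1).tendsto_atTop
    obtain ⟨φ2, hφ2, hces⟩ := h (e m) (fun k => c (s (φ1 k)) (e m)) hwsn
    refine ⟨φ1 ∘ φ2, hφ1.comp hφ2, ⟨α, ?_⟩, ?_⟩
    · exact hconv.comp hφ2.tendsto_atTop
    · intro ψ hψ
      exact hces ψ hψ
  choose φsel hφsel_mono hφsel_prop using step
  -- nested subsequences
  set S : ℕ → {t : ℕ → ℕ // StrictMono t} := fun m => Nat.rec ⟨id, strictMono_id⟩
    (fun m ih => ⟨ih.1 ∘ φsel ih.1 ih.2 m, ih.2.comp (hφsel_mono ih.1 ih.2 m)⟩) m with hS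
  have hSsucc : ∀ m, (S (m+1)).1 = (S m).1 ∘ φsel (S m).1 (S m).2 m := fun m => rfl
  have hSprop : ∀ m,
      (∃ α : ℝ, Tendsto (fun k => σ ((S (m+1)).1 k) (e m)) atTop (𝓝 α)) ∧
      (∀ ψ : ℕ → ℕ, StrictMono ψ → CesaroMackeyNull fun k => c ((S (m+1)).1 (ψ k)) (e m)) :=
    fun m => hφsel_prop (S m).1 (S m).2 m
  -- diagonal sequence
  set d : ℕ → ℕ := fun k => (S (k+1)).1 k with hd
  have hd_mono : StrictMono d := by
    apply strictMono_nat_of_lt_succ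
    intro k
    have h1 : (S (k+1)).1 k < (S (k+1)).1 (k+1) := (S (k+1)).2 (Nat.lt_succ_self k)
    have h2 : (k+1) ≤ φsel (S (k+1)).1 (S (k+1)).2 (k+1) (k+1) :=
      (hφsel_mono (S (k+1)).1 (S (k+1)).2 (k+1)).le_apply
    have h3 : (S (k+1)).1 (k+1) ≤ (S (k+1)).1 (φsel (S (k+1)).1 (S (k+1)).2 (k+1) (k+1)) :=
      ((S (k+1)).2).monotone h2
    exact lt_of_lt_of_le h1 h3
  -- tail structure: composition operators
  set U : ℕ → ℕ → ℕ → ℕ := fun m j => Nat.rec id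
    (fun n ihn => ihn ∘ φsel (S (m+n)).1 (S (m+n)).2 (m+n)) j with hU
  have hU_succ : ∀ m j, U m (j+1) = U m j ∘ φsel (S (m+j)).1 (S (m+j)).2 (m+j) :=
    fun m j => rfl
  have hU_mono : ∀ m j, StrictMono (U m j) := by
    intro m j
    induction j with
    | zero => exact strictMono_id
    | succ n ih => exact ih.comp (hφsel_mono _ _ _)
  have hU_eq : ∀ m j x, (S (m+j)).1 x = (S m).1 (U m j x) := by
    intro m j
    induction j with
    | zero => intro x; rfl
    | succ n ih =>
        intro x
        have h1 : (S (m+n+1)).1 x = (S (m+n)).1 (φsel (S (m+n)).1 (S (m+n)).2 (m+n) x) := rfl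
        have h2 : m + (n+1) = m + n + 1 := rfl
        rw [h2, h1, ih]
        rfl
  -- tail identity for d
  have hd_tail : ∀ m, ∃ v : ℕ → ℕ, StrictMono v ∧
      ∀ j, d (j + (m+1)) = (S (m+1)).1 (v j) := by
    intro m
    refine ⟨fun j => U (m+1) (j+1) (j + m + 1), ?_, ?_⟩
    · apply strictMono_nat_of_lt_succ
      intro j
      have h1 : U (m+1) (j+2) (j+1+m+1)
          = U (m+1) (j+1) (φsel (S (m+1+(j+1))).1 (S (m+1+(j+1))).2 (m+1+(j+1)) (j+1+m+1)) := by
        rw [hU_succ (m+1) (j+1)]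
        rfl
      have h2 : (j+1+m+1) ≤ φsel (S (m+1+(j+1))).1 (S (m+1+(j+1))).2 (m+1+(j+1)) (j+1+m+1) :=
        (hφsel_mono _ _ _).le_apply
      have h3 : U (m+1) (j+1) (j+1+m+1)
          ≤ U (m+1) (j+1) (φsel (S (m+1+(j+1))).1 (S (m+1+(j+1))).2 (m+1+(j+1)) (j+1+m+1)) :=
        (hU_mono (m+1) (j+1)).monotone h2
      have h4 : U (m+1) (j+1) (j + m + 1) < U (m+1) (j+1) (j+1+m+1) :=
        (hU_mono (m+1) (j+1)) (by omega)
      calc U (m+1) (j+1) (j + m + 1) < U (m+1) (j+1) (j+1+m+1) := h4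
        _ ≤ _ := h3.trans_eq h1.symm
    · intro j
      have hidx : j + (m+1) + 1 = (m+1) + (j+1) := by omega
      calc d (j + (m+1)) = (S (j + (m+1) + 1)).1 (j + (m+1)) := rfl
        _ = (S ((m+1) + (j+1))).1 (j + (m+1)) := by rw [hidx]
        _ = (S (m+1)).1 (U (m+1) (j+1) (j + (m+1))) := hU_eq (m+1) (j+1) _
        _ = (S (m+1)).1 (U (m+1) (j+1) (j + m + 1)) := rfl
  -- hereditary coordinate property along d
  have hcoord_heredit : ∀ i, ∀ ψ0 : ℕ → ℕ, StrictMono ψ0 →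
      CesaroMackeyNull fun k => c (d (ψ0 k)) i := by
    intro i ψ0 hψ0
    by_cases hiJ : i ∈ Jset
    · obtain ⟨m, rfl⟩ : ∃ m, e m = i := by
        rw [hJrange] at hiJ
        exact hiJ
      obtain ⟨v, hv, hvd⟩ := hd_tail m
      set K := m + 1 with hK
      have hψK : ∀ j, K ≤ ψ0 (j + K) := fun j =>
        le_trans (Nat.le_add_left K j) hψ0.le_apply
      set ψ' : ℕ → ℕ := fun j => v (ψ0 (j + K) - K) with hψ'
      have hψ'_mono : StrictMono ψ' := by
        intro a b hab
        apply hv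
        have h1 : ψ0 (a + K) < ψ0 (b + K) := hψ0 (by omega)
        have h2 := hψK a
        omega
      have hid : ∀ j, d (ψ0 (j + K)) = (S K).1 (ψ' j) := by
        intro j
        have h1 : ψ0 (j + K) = (ψ0 (j + K) - K) + K := by
          have := hψK j
          omega
        rw [hψ']
        calc d (ψ0 (j + K)) = d ((ψ0 (j + K) - K) + K) := by rw [← h1]
          _ = (S K).1 (v (ψ0 (j + K) - K)) := hvd _
      have hshift : CesaroMackeyNull (fun j => c (d (ψ0 (j + K))) (e m)) := by
        have h1 := (hSprop m).2 ψ' hψ'_mono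
        have heqf : (fun j => c (d (ψ0 (j + K))) (e m))
            = fun k => c ((S (m+1)).1 (ψ' k)) (e m) := funext fun j => by rw [hid j]
        rw [heqf]
        exact h1
      exact cesaroMackeyNull_of_shift (C := C) (fun k => hcnorm _ _) K hshift
    · have hzf : (fun k => c (d (ψ0 k)) i) = fun _ => 0 :=
        funext fun k => hoff i hiJ _
      rw [hzf]
      exact cesaroMackeyNull_zero
  -- coordinatewise limits along d
  have hαex : ∀ i, ∃ α : ℝ, Tendsto (fun k => σ (d k) i) atTop (𝓝 α) := by
    intro i
    by_cases hiJ : i ∈ Jset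
    · obtain ⟨m, rfl⟩ : ∃ m, e m = i := by
        rw [hJrange] at hiJ
        exact hiJ
      obtain ⟨α, hα⟩ := (hSprop m).1
      obtain ⟨v, hv, hvd⟩ := hd_tail m
      refine ⟨α, ?_⟩
      have h2 : Tendsto (fun j => σ (d (j + (m+1))) (e m)) atTop (𝓝 α) := by
        have h3 := hα.comp hv.tendsto_atTop
        have heqf : (fun j => σ (d (j + (m+1))) (e m))
            = fun j => σ ((S (m+1)).1 (v j)) (e m) := funext fun j => by rw [hvd j]
        rw [heqf]
        exact h3
      exact (tendsto_add_atTop_iff_nat (m+1)).mp h2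
    · refine ⟨0, ?_⟩
      have hz : (fun k => σ (d k) i) = fun _ => 0 := funext fun k => by
        rw [hσ]
        simp only
        rw [hoff i hiJ (d k)]
        exact norm_zero
      rw [hz]
      exact tendsto_const_nhds
  choose α hα using hαex
  have hαnn : ∀ i, 0 ≤ α i := fun i => ge_of_tendsto' (hα i) (fun k => hσnn _ i)
  have hαsum_le : ∀ F : Finset I, ∑ i ∈ F, α i ^ Q ≤ C ^ Q := by
    intro F
    have h1 : Tendsto (fun k => ∑ i ∈ F, σ (d k) i ^ Q) atTop (𝓝 (∑ i ∈ F, α i ^ Q)) :=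
      tendsto_finset_sum _ (fun i _ => ((hα i).rpow_const (Or.inr hQ0.le)))
    exact le_of_tendsto h1 (Filter.Eventually.of_forall fun k => hcoord_sum (d k) F)
  have hαsummable : Summable fun i => α i ^ Q :=
    summable_of_sum_le (fun i => Real.rpow_nonneg (hαnn i) _) hαsum_le
  have hαtsum : ∑' i, α i ^ Q ≤ C ^ Q :=
    le_of_tendsto' hαsummable.hasSum (fun s => hαsum_le s)
  -- the error sequence and gliding hump
  set err : ℕ → I → ℝ := fun k i => σ (d k) i - α i with herr
  have hσabs : ∀ n, Summable fun i => |σ n i| ^ Q := fun n =>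
    (hσsummable n).congr fun i => by rw [abs_of_nonneg (hσnn n i)]
  have hαabs : Summable fun i => |α i| ^ Q :=
    hαsummable.congr fun i => by rw [abs_of_nonneg (hαnn i)]
  have hnegαabs : Summable fun i => |-(α i)| ^ Q := by
    refine hαabs.congr fun i => by rw [abs_neg]
  have hserr : ∀ k, Summable fun i => |err k i| ^ Q := by
    intro k
    have h1 := (lq_add hQ1.le (u := fun i => σ (d k) i) (v := fun i => -(α i))
      (hσabs (d k)) hnegαabs).1
    exact h1.congr fun i => by rw [herr]; ring_nf
  have herrD : ∀ k, ∑' i, |err k i| ^ Q ≤ (2*C) ^ Q := by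
    intro k
    have h1 := (lq_add hQ1.le (u := fun i => σ (d k) i) (v := fun i => -(α i))
      (hσabs (d k)) hnegαabs).2
    have h2 : (∑' i, |σ (d k) i + -(α i)| ^ Q) = ∑' i, |err k i| ^ Q :=
      tsum_congr fun i => by rw [herr]; ring_nf
    rw [h2] at h1
    have h3 : (∑' i, |σ (d k) i| ^ Q) ^ ((1:ℝ)/Q) ≤ C := by
      have h4 : (∑' i, |σ (d k) i| ^ Q) = ∑' i, σ (d k) i ^ Q :=
        tsum_congr fun i => by rw [abs_of_nonneg (hσnn _ i)]
      rw [h4]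
      calc (∑' i, σ (d k) i ^ Q) ^ ((1:ℝ)/Q) ≤ (C ^ Q) ^ ((1:ℝ)/Q) :=
            Real.rpow_le_rpow (tsum_nonneg fun i => Real.rpow_nonneg (hσnn _ i) _)
              (hσtsum (d k)) (by positivity)
        _ = C := by rw [one_div, Real.rpow_rpow_inv hC0 hQ0.ne']
    have h5 : (∑' i, |-(α i)| ^ Q) ^ ((1:ℝ)/Q) ≤ C := by
      have h6 : (∑' i, |-(α i)| ^ Q) = ∑' i, α i ^ Q :=
        tsum_congr fun i => by rw [abs_neg, abs_of_nonneg (hαnn i)]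
      rw [h6]
      calc (∑' i, α i ^ Q) ^ ((1:ℝ)/Q) ≤ (C ^ Q) ^ ((1:ℝ)/Q) :=
            Real.rpow_le_rpow (tsum_nonneg fun i => Real.rpow_nonneg (hαnn i) _)
              hαtsum (by positivity)
        _ = C := by rw [one_div, Real.rpow_rpow_inv hC0 hQ0.ne']
    have h7 : (∑' i, |err k i| ^ Q) ^ ((1:ℝ)/Q) ≤ 2*C := by
      calc (∑' i, |err k i| ^ Q) ^ ((1:ℝ)/Q)
          ≤ (∑' i, |σ (d k) i| ^ Q) ^ (1/Q) + (∑' i, |-(α i)| ^ Q) ^ (1/Q) := h1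
        _ ≤ C + C := add_le_add h3 h5
        _ = 2*C := by ring
    have h8 := Real.rpow_le_rpow (Real.rpow_nonneg
      (tsum_nonneg fun i => Real.rpow_nonneg (abs_nonneg _) _) _) h7 hQ0.le
    rwa [one_div, Real.rpow_inv_rpow
      (tsum_nonneg fun i => Real.rpow_nonneg (abs_nonneg _) _) hQ0.ne'] at h8
  have herrnull : ∀ i, Tendsto (fun k => err k i) atTop (𝓝 0) := by
    intro i
    have h1 := (hα i).sub_const (α i)
    simpa [herr] using h1
  obtain ⟨χ, hχmono, hχ⟩ := gliding_hump hQ1 (by positivity : (0:ℝ) ≤ (2*C)^Q)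
    hserr herrD herrnull
  -- the final subsequence
  refine ⟨fun k => d (χ k), hd_mono.comp hχmono, ?_⟩
  intro ψ hψ
  intro W hW
  obtain ⟨M, hM0, hM⟩ := hW.exists_bound
  rw [Metric.tendstoUniformlyOn_iff]
  intro ε hε
  set δ : ℝ := ε / (2 * M + 2) with hδdef
  have hδpos : 0 < δ := by
    apply div_pos hε
    linarith
  obtain ⟨Fc, -, hFc⟩ := exists_tail_small hαsummable
    (fun i => Real.rpow_nonneg (hαnn i) _) ∅ (by positivity : (0:ℝ) < δ ^ Q)
  set δ' : ℝ := δ / (Fc.card + 1) with hδ'def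
  have hδ'pos : 0 < δ' := by positivity
  have hev1 : ∀ᶠ N : ℕ in atTop,
      (∑' i, |(N:ℝ)⁻¹ * ∑ k ∈ Finset.range N, err (χ (ψ k)) i| ^ Q) ^ (1/Q) < δ := by
    have h1 := Metric.tendsto_nhds.mp (hχ ψ hψ) δ hδpos
    exact h1.mono fun N hN => by
      rw [Real.dist_eq, sub_zero] at hN
      exact lt_of_le_of_lt (le_abs_self _) hN
  have hev2 : ∀ᶠ N : ℕ in atTop, ∀ i ∈ Fc, ∀ x ∈ W,
      |(N:ℝ)⁻¹ * ∑ k ∈ Finset.range N, c (d (χ (ψ k))) i (x i)| < δ' := by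
    rw [Filter.eventually_all_finset]
    intro i hi
    have hWi : WeaklyCompact ((lpProjCLM (E := E) hp0 i) '' W) := hW.image_clm _
    have h2 := hcoord_heredit i (χ ∘ ψ) (hχmono.comp hψ) _ hWi
    rw [Metric.tendstoUniformlyOn_iff] at h2
    have h3 := h2 δ' hδ'pos
    refine h3.mono fun N hN x hx => ?_
    have h4 := hN (x i) ⟨x, hx, rfl⟩
    rw [Real.dist_eq] at h4
    have h5 : |(0:ℝ) - (N:ℝ)⁻¹ • ∑ k ∈ Finset.range N, c (d (χ (ψ k))) i (x i)|
        = |(N:ℝ)⁻¹ * ∑ k ∈ Finset.range N, c (d (χ (ψ k))) i (x i)| := by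
      rw [zero_sub, abs_neg, smul_eq_mul]
    rw [← h5]
    exact h4
  filter_upwards [hev1, hev2, Filter.eventually_ge_atTop 1] with N hN1 hN2 hN3
  intro x hx
  have hNR : (0:ℝ) < (N:ℝ) := by exact_mod_cast hN3
  have hNinv : (0:ℝ) ≤ (N:ℝ)⁻¹ := by positivity
  have hxM : ‖x‖ ≤ M := hM x hx
  have hTsum : HasSum (fun i => ∑ n ∈ Finset.range N, c (d (χ (ψ n))) i (x i))
      (∑ n ∈ Finset.range N, f (d (χ (ψ n))) x) :=
    hasSum_sum (fun n _ => hfval (d (χ (ψ n))) x)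
  set T : I → ℝ := fun i => ∑ n ∈ Finset.range N, c (d (χ (ψ n))) i (x i) with hT
  have hTsummable : Summable T := hTsum.summable
  have hmean_eq : (N:ℝ)⁻¹ • ∑ n ∈ Finset.range N, f (d (χ (ψ n))) x
      = ∑' i, (N:ℝ)⁻¹ * T i := by
    rw [smul_eq_mul, ← hTsum.tsum_eq, ← tsum_mul_left]
  have hsplit := tsum_split_finset (hTsummable.mul_left ((N:ℝ)⁻¹)) Fc
  -- coordinate part
  have hcoordpart : |∑ i ∈ Fc, (N:ℝ)⁻¹ * T i| ≤ δ := by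
    have hcard1 : (0:ℝ) < (Fc.card:ℝ) + 1 := by positivity
    calc |∑ i ∈ Fc, (N:ℝ)⁻¹ * T i| ≤ ∑ i ∈ Fc, |(N:ℝ)⁻¹ * T i| :=
          Finset.abs_sum_le_sum_abs _ _
      _ ≤ ∑ _i ∈ Fc, δ' := Finset.sum_le_sum fun i hi => (hN2 i hi x hx).le
      _ = (Fc.card : ℝ) * δ' := by rw [Finset.sum_const, nsmul_eq_mul]
      _ = δ * ((Fc.card : ℝ) / ((Fc.card:ℝ) + 1)) := by
          rw [hδ'def]; ring
      _ ≤ δ * 1 := by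
          refine mul_le_mul_of_nonneg_left ?_ hδpos.le
          rw [div_le_one hcard1]
          linarith
      _ = δ := mul_one δ
  -- tail part
  set bb : I → ℝ := fun i => (N:ℝ)⁻¹ * ∑ n ∈ Finset.range N, σ (d (χ (ψ n))) i with hbb
  have hbbnn : ∀ i, 0 ≤ bb i :=
    fun i => mul_nonneg hNinv (Finset.sum_nonneg fun n _ => hσnn _ _)
  have hTabs : ∀ i, |T i| ≤ (∑ n ∈ Finset.range N, σ (d (χ (ψ n))) i) * ‖x i‖ := by
    intro i
    calc |T i| ≤ ∑ n ∈ Finset.range N, |c (d (χ (ψ n))) i (x i)| :=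
          Finset.abs_sum_le_sum_abs _ _
      _ ≤ ∑ n ∈ Finset.range N, σ (d (χ (ψ n))) i * ‖x i‖ :=
          Finset.sum_le_sum fun n _ => (c (d (χ (ψ n))) i).le_opNorm (x i)
      _ = (∑ n ∈ Finset.range N, σ (d (χ (ψ n))) i) * ‖x i‖ := by rw [Finset.sum_mul]
  have htail_ptwise : ∀ i, |if i ∈ Fc then 0 else (N:ℝ)⁻¹ * T i|
      ≤ (if i ∈ Fc then 0 else bb i) * (if i ∈ Fc then 0 else ‖x i‖) := by
    intro i
    by_cases hi : i ∈ Fc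
    · simp [hi]
    · simp only [if_neg hi]
      rw [abs_mul, abs_of_nonneg hNinv, hbb]
      simp only
      rw [mul_assoc]
      exact mul_le_mul_of_nonneg_left (hTabs i) hNinv
  have hbbQ_sum : Summable fun i => |bb i| ^ Q :=
    lq_smul_summable _
      ((lq_finsum hQ1.le (fun n i => σ (d (χ (ψ n))) i) (fun n => hσabs (d (χ (ψ n)))) N).1)
  have hxP_sum : Summable fun i => ‖x i‖ ^ P := (lp.hasSum_norm hPpos x).summable
  have hxP_tsum : ∑' i, ‖x i‖ ^ P = ‖x‖ ^ P := (lp.hasSum_norm hPpos x).tsum_eq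
  have hite_norm_nn : ∀ i, (0:ℝ) ≤ (if i ∈ Fc then 0 else ‖x i‖) := by
    intro i; by_cases hi : i ∈ Fc <;> simp [hi]
  have hite_bb_nn : ∀ i, (0:ℝ) ≤ (if i ∈ Fc then 0 else bb i) := by
    intro i; by_cases hi : i ∈ Fc <;> simp [hi, hbbnn i]
  have hw_sum : Summable fun i => (if i ∈ Fc then 0 else ‖x i‖) ^ P := by
    refine Summable.of_nonneg_of_le (fun i => Real.rpow_nonneg (hite_norm_nn i) _)
      (fun i => ?_) hxP_sum
    refine Real.rpow_le_rpow (hite_norm_nn i) ?_ hPpos.le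
    by_cases hi : i ∈ Fc <;> simp [hi]
  have hu_sum : Summable fun i => (if i ∈ Fc then 0 else bb i) ^ Q := by
    refine Summable.of_nonneg_of_le (fun i => Real.rpow_nonneg (hite_bb_nn i) _)
      (fun i => ?_) hbbQ_sum
    refine Real.rpow_le_rpow (hite_bb_nn i) ?_ hQ0.le
    by_cases hi : i ∈ Fc
    · simp [hi]
    · simp [hi, le_abs_self]
  obtain ⟨hfg_sum, hHolder⟩ := Real.summable_and_inner_le_Lp_mul_Lq_tsum_of_nonneg hpq.symm
    (f := fun i => if i ∈ Fc then 0 else bb i) (g := fun i => if i ∈ Fc then 0 else ‖x i‖)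
    hite_bb_nn hite_norm_nn hu_sum hw_sum
  -- mean error
  set meanerr : I → ℝ := fun i => (N:ℝ)⁻¹ * ∑ k ∈ Finset.range N, err (χ (ψ k)) i with hme
  have hme_sumQ : Summable fun i => |meanerr i| ^ Q :=
    lq_smul_summable _
      ((lq_finsum hQ1.le (fun k i => err (χ (ψ k)) i) (fun k => hserr (χ (ψ k))) N).1)
  have hbb_decomp : ∀ i, bb i = α i + meanerr i := by
    intro i
    rw [hme, hbb]
    simp only
    have h1 : ∑ k ∈ Finset.range N, err (χ (ψ k)) i
        = (∑ k ∈ Finset.range N, σ (d (χ (ψ k))) i) - N * α i := by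
      rw [herr]
      simp only
      rw [Finset.sum_sub_distrib, Finset.sum_const, Finset.card_range, nsmul_eq_mul]
    rw [h1, mul_sub, ← mul_assoc, inv_mul_cancel₀ hNR.ne', one_mul]
    ring
  -- factor 1 bound
  have hfactor1 : (∑' i, (if i ∈ Fc then 0 else bb i) ^ Q) ^ ((1:ℝ)/Q) ≤ 2 * δ := by
    have huv : ∀ i, (if i ∈ Fc then 0 else bb i)
        = (if i ∈ Fc then 0 else α i) + (if i ∈ Fc then 0 else meanerr i) := by
      intro i
      by_cases hi : i ∈ Fc
      · simp [hi]
      · simp only [if_neg hi]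
        exact hbb_decomp i
    have hsu : Summable fun i => |if i ∈ Fc then 0 else α i| ^ Q := by
      refine Summable.of_nonneg_of_le (fun i => Real.rpow_nonneg (abs_nonneg _) _)
        (fun i => ?_) hαabs
      refine Real.rpow_le_rpow (abs_nonneg _) ?_ hQ0.le
      by_cases hi : i ∈ Fc <;> simp [hi]
    have hsv : Summable fun i => |if i ∈ Fc then 0 else meanerr i| ^ Q := by
      refine Summable.of_nonneg_of_le (fun i => Real.rpow_nonneg (abs_nonneg _) _)
        (fun i => ?_) hme_sumQ
      refine Real.rpow_le_rpow (abs_nonneg _) ?_ hQ0.le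
      by_cases hi : i ∈ Fc <;> simp [hi]
    obtain ⟨-, hmink⟩ := lq_add hQ1.le (u := fun i => if i ∈ Fc then 0 else α i)
      (v := fun i => if i ∈ Fc then 0 else meanerr i) hsu hsv
    have hcong : (∑' i, (if i ∈ Fc then 0 else bb i) ^ Q)
        = ∑' i, |(if i ∈ Fc then 0 else α i) + (if i ∈ Fc then 0 else meanerr i)| ^ Q := by
      refine tsum_congr fun i => ?_
      rw [← huv i, abs_of_nonneg (hite_bb_nn i)]
    have hpart1 : (∑' i, |if i ∈ Fc then 0 else α i| ^ Q) ^ ((1:ℝ)/Q) ≤ δ := by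
      have he1 : (∑' i, |if i ∈ Fc then 0 else α i| ^ Q)
          = ∑' i, (if i ∈ Fc then 0 else α i ^ Q) := by
        refine tsum_congr fun i => ?_
        by_cases hi : i ∈ Fc
        · simp [hi, Real.zero_rpow hQ0.ne']
        · simp [hi, abs_of_nonneg (hαnn i)]
      rw [he1]
      calc (∑' i, (if i ∈ Fc then 0 else α i ^ Q)) ^ ((1:ℝ)/Q) ≤ (δ ^ Q) ^ ((1:ℝ)/Q) := by
            refine Real.rpow_le_rpow ?_ hFc (by positivity)
            refine tsum_nonneg fun i => ?_
            by_cases hi : i ∈ Fc <;> simp [hi, Real.rpow_nonneg (hαnn i)]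
        _ = δ := by rw [one_div, Real.rpow_rpow_inv hδpos.le hQ0.ne']
    have hpart2 : (∑' i, |if i ∈ Fc then 0 else meanerr i| ^ Q) ^ ((1:ℝ)/Q) ≤ δ := by
      have he2 : (∑' i, |if i ∈ Fc then 0 else meanerr i| ^ Q) ≤ ∑' i, |meanerr i| ^ Q := by
        refine Summable.tsum_le_tsum (fun i => ?_) hsv hme_sumQ
        refine Real.rpow_le_rpow (abs_nonneg _) ?_ hQ0.le
        by_cases hi : i ∈ Fc <;> simp [hi]
      calc (∑' i, |if i ∈ Fc then 0 else meanerr i| ^ Q) ^ ((1:ℝ)/Q)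
          ≤ (∑' i, |meanerr i| ^ Q) ^ ((1:ℝ)/Q) := by
            refine Real.rpow_le_rpow ?_ he2 (by positivity)
            exact tsum_nonneg fun i => Real.rpow_nonneg (abs_nonneg _) _
        _ ≤ δ := hN1.le
    calc (∑' i, (if i ∈ Fc then 0 else bb i) ^ Q) ^ ((1:ℝ)/Q)
        = (∑' i, |(if i ∈ Fc then 0 else α i) + (if i ∈ Fc then 0 else meanerr i)| ^ Q)
            ^ ((1:ℝ)/Q) := by rw [hcong]
      _ ≤ (∑' i, |if i ∈ Fc then 0 else α i| ^ Q) ^ ((1:ℝ)/Q)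
            + (∑' i, |if i ∈ Fc then 0 else meanerr i| ^ Q) ^ ((1:ℝ)/Q) := hmink
      _ ≤ δ + δ := add_le_add hpart1 hpart2
      _ = 2 * δ := by ring
  -- factor 2 bound
  have hfactor2 : (∑' i, (if i ∈ Fc then 0 else ‖x i‖) ^ P) ^ ((1:ℝ)/P) ≤ M := by
    have he3 : (∑' i, (if i ∈ Fc then 0 else ‖x i‖) ^ P) ≤ ‖x‖ ^ P := by
      rw [← hxP_tsum]
      refine Summable.tsum_le_tsum (fun i => ?_) hw_sum hxP_sum
      refine Real.rpow_le_rpow (hite_norm_nn i) ?_ hPpos.le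
      by_cases hi : i ∈ Fc <;> simp [hi]
    calc (∑' i, (if i ∈ Fc then 0 else ‖x i‖) ^ P) ^ ((1:ℝ)/P)
        ≤ (‖x‖ ^ P) ^ ((1:ℝ)/P) := by
          refine Real.rpow_le_rpow ?_ he3 (by positivity)
          exact tsum_nonneg fun i => Real.rpow_nonneg (hite_norm_nn i) _
      _ = ‖x‖ := by rw [one_div, Real.rpow_rpow_inv (norm_nonneg x) hPpos.ne']
      _ ≤ M := hxM
  -- tail bound
  have habs_tail_sum : Summable fun i => |if i ∈ Fc then 0 else (N:ℝ)⁻¹ * T i| :=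
    Summable.of_nonneg_of_le (fun i => abs_nonneg _) htail_ptwise hfg_sum
  have htailpart : |∑' i, (if i ∈ Fc then 0 else (N:ℝ)⁻¹ * T i)| ≤ (2*δ) * M := by
    have h1 : ‖∑' i, (if i ∈ Fc then 0 else (N:ℝ)⁻¹ * T i)‖
        ≤ ∑' i, ‖if i ∈ Fc then 0 else (N:ℝ)⁻¹ * T i‖ :=
      norm_tsum_le_tsum_norm (by simpa [Real.norm_eq_abs] using habs_tail_sum)
    rw [Real.norm_eq_abs] at h1
    calc |∑' i, (if i ∈ Fc then 0 else (N:ℝ)⁻¹ * T i)|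
        ≤ ∑' i, ‖if i ∈ Fc then 0 else (N:ℝ)⁻¹ * T i‖ := h1
      _ = ∑' i, |if i ∈ Fc then 0 else (N:ℝ)⁻¹ * T i| :=
          tsum_congr fun i => Real.norm_eq_abs _
      _ ≤ ∑' i, (if i ∈ Fc then 0 else bb i) * (if i ∈ Fc then 0 else ‖x i‖) :=
          Summable.tsum_le_tsum htail_ptwise habs_tail_sum hfg_sum
      _ ≤ (∑' i, (if i ∈ Fc then 0 else bb i) ^ Q) ^ ((1:ℝ)/Q)
            * (∑' i, (if i ∈ Fc then 0 else ‖x i‖) ^ P) ^ ((1:ℝ)/P) := hHolder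
      _ ≤ (2*δ) * M := by
          refine mul_le_mul hfactor1 hfactor2 ?_ (by linarith)
          exact Real.rpow_nonneg
            (tsum_nonneg fun i => Real.rpow_nonneg (hite_norm_nn i) _) _
  -- putting it together
  have hfinal : |(N:ℝ)⁻¹ • ∑ n ∈ Finset.range N, f (d (χ (ψ n))) x| < ε := by
    rw [hmean_eq, hsplit]
    calc |(∑ i ∈ Fc, (N:ℝ)⁻¹ * T i) + ∑' i, (if i ∈ Fc then 0 else (N:ℝ)⁻¹ * T i)|
        ≤ |∑ i ∈ Fc, (N:ℝ)⁻¹ * T i| + |∑' i, (if i ∈ Fc then 0 else (N:ℝ)⁻¹ * T i)| :=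
          abs_add_le _ _
      _ ≤ δ + (2*δ) * M := add_le_add hcoordpart htailpart
      _ < ε := by
          have hδε : δ * (2*M+2) = ε := by
            rw [hδdef]
            field_simp
          nlinarith [hδpos, hM0]
  have hgoal : dist ((0 : lp E p → ℝ) x)
      ((N:ℝ)⁻¹ • ∑ n ∈ Finset.range N, f (d (χ (ψ n))) x) < ε := by
    rw [Real.dist_eq]
    have : (0 : lp E p → ℝ) x = 0 := rfl
    rw [this, zero_sub, abs_neg]
    exact hfinal
  exact hgoal
end
end

section
/- Let X be a Köthe function space with order continuous norm over a finite measure space (Ω,Σ,ν). Then the inclusion operator i : L∞(ν) → X is super weakly compact. -/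
open Filter Topology MeasureTheory Pointwise

noncomputable section

/-- An `ε`-separated dyadic tree of height `n` inside `C`: nodes indexed by boolean words
of length `≤ n`, each node the midpoint of its two children, children `ε`-separated. -/
def DyadicTreeIn {X : Type*} [NormedAddCommGroup X] [NormedSpace ℝ X]
    (C : Set X) (ε : ℝ) (n : ℕ) : Prop :=
  ∃ x : List Bool → X,
    (∀ s : List Bool, s.length ≤ n → x s ∈ C) ∧
    ∀ s : List Bool, s.length < n →
      x s = (2 : ℝ)⁻¹ • (x (s ++ [false]) + x (s ++ [true])) ∧
      ε ≤ ‖x (s ++ [false]) - x (s ++ [true])‖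

/-- A bounded convex set is super weakly compact iff for every `ε > 0` the heights of the
`ε`-separated dyadic trees contained in it are bounded; we take this as the definition of a
super weakly compact set. -/
def SuperWeaklyCompactSet {X : Type*} [NormedAddCommGroup X] [NormedSpace ℝ X]
    (C : Set X) : Prop :=
  Bornology.IsBounded C ∧ ∀ ε : ℝ, 0 < ε → ∃ n : ℕ, ¬ DyadicTreeIn C ε n

/-- An operator is super weakly compact if the image of the closed unit ball is a super
weakly compact set. -/
def SuperWeaklyCompactOperator {X Y : Type*} [NormedAddCommGroup X] [NormedSpace ℝ X]
    [NormedAddCommGroup Y] [NormedSpace ℝ Y] (T : Y →L[ℝ] X) : Prop :=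
  SuperWeaklyCompactSet (T '' Metric.closedBall (0 : Y) 1)


open scoped ENNReal NNReal

private lemma jmono' {X Y : Type*} [Lattice X] [Lattice Y]
    (j : X → Y) (hjinj : Function.Injective j)
    (hjlat : ∀ x y : X, j (x ⊔ y) = j x ⊔ j y) {x y : X} :
    j x ≤ j y ↔ x ≤ y := by
  constructor
  · intro h
    have h1 : j (x ⊔ y) = j y := by rw [hjlat]; exact sup_eq_right.mpr h
    exact sup_eq_right.mp (hjinj h1)
  · intro h
    have h1 : x ⊔ y = y := sup_eq_right.mpr h
    calc j x ≤ j x ⊔ j y := le_sup_left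
      _ = j (x ⊔ y) := (hjlat x y).symm
      _ = j y := by rw [h1]

private lemma jabs' {X E : Type*} [NormedAddCommGroup X] [Lattice X] [IsOrderedAddMonoid X] [HasSolidNorm X] [NormedSpace ℝ X]
    [NormedAddCommGroup E] [Lattice E] [IsOrderedAddMonoid E] [HasSolidNorm E] [NormedSpace ℝ E]
    (j : X →L[ℝ] E)
    (hjlat : ∀ x y : X, j (x ⊔ y) = j x ⊔ j y) (x : X) :
    j |x| = |j x| := by
  show j (x ⊔ -x) = (j x) ⊔ -(j x)
  rw [hjlat, map_neg]

private lemma keyA {X E : Type*} [NormedAddCommGroup X] [Lattice X] [IsOrderedAddMonoid X] [HasSolidNorm X] [NormedSpace ℝ X]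
    [NormedAddCommGroup E] [Lattice E] [IsOrderedAddMonoid E] [HasSolidNorm E] [NormedSpace ℝ E] [CompleteSpace E]
    (j : X →L[ℝ] E) (hjinj : Function.Injective j)
    (hjlat : ∀ x y : X, j (x ⊔ y) = j x ⊔ j y)
    (hsolid : ∀ (f : E) (x : X), |f| ≤ |j x| → ∃ z : X, j z = f ∧ ‖z‖ ≤ ‖x‖)
    (horder : ∀ u : ℕ → X, Antitone u → IsGLB (Set.range u) 0 →
      Tendsto (fun n => ‖u n‖) atTop (𝓝 0))
    (c : X) (hc : 0 ≤ j c) (ε : ℝ) (hε : 0 < ε) :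
    ∃ δ : ℝ, 0 < δ ∧ ∀ x : X, |j x| ≤ j c → ε ≤ ‖x‖ → δ ≤ ‖j x‖ := by
  by_contra hcon
  push_neg at hcon
  have hex : ∀ n : ℕ, ∃ x : X, |j x| ≤ j c ∧ ε ≤ ‖x‖ ∧ ‖j x‖ < (1/2 : ℝ) ^ n := by
    intro n
    obtain ⟨x, h1, h2, h3⟩ := hcon ((1/2 : ℝ) ^ n) (by positivity)
    exact ⟨x, h1, h2, h3⟩
  choose x hxb hxε hxn using hex
  set f : ℕ → E := fun n => |j (x n)| with hf
  have hfnorm : ∀ n, ‖f n‖ < (1/2 : ℝ) ^ n := by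
    intro n; rw [hf]; simpa [norm_abs_eq_norm] using hxn n
  have hfnn : ∀ n, 0 ≤ f n := fun n => abs_nonneg _
  have hnormsum : Summable fun n => ‖f n‖ :=
    Summable.of_nonneg_of_le (fun n => norm_nonneg _) (fun n => (hfnorm n).le)
      summable_geometric_two
  have hsum : Summable f := Summable.of_norm hnormsum
  have hvsum : ∀ n : ℕ, Summable fun k => f (k + n) := fun n =>
    (summable_nat_add_iff n).mpr hsum
  set v : ℕ → E := fun n => ∑' k, f (k + n) with hv
  have hfv : ∀ n m : ℕ, n ≤ m → f m ≤ v n := by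
    intro n m hnm
    have := Summable.le_tsum (hvsum n) (m - n) (fun k _ => hfnn _)
    rwa [Nat.sub_add_cancel hnm] at this
  have hvstep : ∀ n, v n = f n + v (n + 1) := by
    intro n
    rw [hv]
    simp only
    rw [Summable.tsum_eq_zero_add (hvsum n)]
    congr 1
    · simp
    · exact tsum_congr fun k => by congr 1; omega
  have hvv : ∀ n, v (n + 1) ≤ v n := by
    intro n; rw [hvstep n]; exact le_add_of_nonneg_left (hfnn n)
  have hvnn : ∀ n, 0 ≤ v n := fun n => tsum_nonneg fun k => hfnn _
  have hvnorm : ∀ n, ‖v n‖ ≤ 2 * (1/2 : ℝ) ^ n := by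
    intro n
    have hs1 : Summable fun k => ‖f (k + n)‖ := (summable_nat_add_iff n).mpr hnormsum
    have h1 : ‖v n‖ ≤ ∑' k, ‖f (k + n)‖ := norm_tsum_le_tsum_norm hs1
    have h2 : ∑' k, ‖f (k + n)‖ ≤ ∑' k : ℕ, (1/2 : ℝ) ^ (k + n) := by
      refine Summable.tsum_le_tsum (fun k => (hfnorm (k + n)).le) hs1 ?_
      exact (summable_nat_add_iff n).mpr summable_geometric_two
    have h3 : ∑' k : ℕ, (1/2 : ℝ) ^ (k + n) = 2 * (1/2) ^ n := by
      simp_rw [pow_add]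
      rw [tsum_mul_right, tsum_geometric_two]
    linarith
  have hvtend : Tendsto (fun n => ‖v n‖) atTop (𝓝 0) := by
    refine squeeze_zero (fun n => norm_nonneg _) hvnorm ?_
    have h : Tendsto (fun n : ℕ => (1/2 : ℝ) ^ n) atTop (𝓝 0) :=
      tendsto_pow_atTop_nhds_zero_of_lt_one (by norm_num) (by norm_num)
    simpa using h.const_mul 2
  -- truncation
  set w : ℕ → E := fun n => v n ⊓ j c with hw
  have hwb : ∀ n, w n ≤ j c := fun n => inf_le_right
  have hwnn : ∀ n, 0 ≤ w n := fun n => le_inf (hvnn n) hc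
  have hwabs : ∀ n, |w n| ≤ |j c| := by
    intro n
    rw [abs_of_nonneg (hwnn n), abs_of_nonneg hc]
    exact hwb n
  have hwmono : ∀ n, w (n + 1) ≤ w n := fun n => inf_le_inf_right _ (hvv n)
  have hfw : ∀ n m, n ≤ m → f m ≤ w n := fun n m h => le_inf (hfv n m h) (hxb m)
  have hzex : ∀ n : ℕ, ∃ z : X, j z = w n := by
    intro n
    obtain ⟨z, hz, -⟩ := hsolid (w n) c (hwabs n)
    exact ⟨z, hz⟩
  choose z hz using hzex
  have hzmono : Antitone z := by
    refine antitone_nat_of_succ_le fun n => ?_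
    rw [← jmono' j hjinj hjlat, hz, hz]
    exact hwmono n
  have hznn : ∀ n, 0 ≤ z n := by
    intro n
    rw [← jmono' j hjinj hjlat, map_zero, hz]
    exact hwnn n
  have hzabs : ∀ n, |x n| ≤ z n := by
    intro n
    rw [← jmono' j hjinj hjlat, hz, jabs' j hjlat]
    exact hfw n n le_rfl
  have hzε : ∀ n, ε ≤ ‖z n‖ := by
    intro n
    refine (hxε n).trans ?_
    rw [← norm_abs_eq_norm (x n), ← norm_abs_eq_norm (z n)]
    refine norm_le_norm_of_abs_le_abs ?_
    rw [abs_abs, abs_abs]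
    rw [abs_of_nonneg (hznn n)]
    exact hzabs n
  have hglb : IsGLB (Set.range z) 0 := by
    constructor
    · rintro y ⟨n, rfl⟩
      exact hznn n
    · intro b hb
      have hb' : ∀ n, b ⊔ 0 ≤ z n := fun n => sup_le (hb ⟨n, rfl⟩) (hznn n)
      have hj0 : ∀ n, ‖j (b ⊔ 0)‖ ≤ ‖v n‖ := by
        intro n
        have h1 : j (b ⊔ 0) ≤ w n := by
          rw [← hz]; exact (jmono' j hjinj hjlat).mpr (hb' n)
        have h2 : (0 : E) ≤ j (b ⊔ 0) := by
          rw [hjlat, map_zero]; exact le_sup_right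
        refine norm_le_norm_of_abs_le_abs ?_
        rw [abs_of_nonneg h2, abs_of_nonneg (hvnn n)]
        exact h1.trans inf_le_left
      have hnorm0 : ‖j (b ⊔ 0)‖ = 0 := by
        have hle : ∀ n, ‖j (b ⊔ 0)‖ ≤ 2 * (1/2 : ℝ) ^ n := fun n => (hj0 n).trans (hvnorm n)
        by_contra hne
        have hpos : 0 < ‖j (b ⊔ 0)‖ := lt_of_le_of_ne (norm_nonneg _) (Ne.symm hne)
        have h : Tendsto (fun n : ℕ => 2 * (1/2 : ℝ) ^ n) atTop (𝓝 0) := by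
          simpa using (tendsto_pow_atTop_nhds_zero_of_lt_one (by norm_num : (0:ℝ) ≤ 1/2)
            (by norm_num)).const_mul 2
        rw [Metric.tendsto_atTop] at h
        obtain ⟨N, hN⟩ := h _ hpos
        have := hN N le_rfl
        rw [Real.dist_eq, sub_zero] at this
        have h2 := hle N
        have h3 : |2 * (1/2 : ℝ) ^ N| = 2 * (1/2 : ℝ) ^ N := abs_of_nonneg (by positivity)
        linarith [abs_of_nonneg (by positivity : (0:ℝ) ≤ 2 * (1/2 : ℝ) ^ N), this]
      have hj00 : j (b ⊔ 0) = 0 := norm_eq_zero.mp hnorm0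
      have : b ⊔ 0 = 0 := hjinj (by rw [hj00, map_zero])
      exact sup_eq_right.mp this
  have := horder z hzmono hglb
  rw [Metric.tendsto_atTop] at this
  obtain ⟨N, hN⟩ := this ε hε
  have := hN N le_rfl
  rw [Real.dist_eq, sub_zero, abs_of_nonneg (norm_nonneg _)] at this
  exact absurd (hzε N) (not_le.mpr this)

private lemma treeBound {H : Type*} [NormedAddCommGroup H] [InnerProductSpace ℝ H]
    (n : ℕ) (R δ : ℝ) (hδ : 0 ≤ δ)
    (h : List Bool → H)
    (hbound : ∀ s : List Bool, s.length ≤ n → ‖h s‖ ≤ R)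
    (hmid : ∀ s : List Bool, s.length < n →
      h (s ++ [false]) + h (s ++ [true]) = (2:ℝ) • h s)
    (hsep : ∀ s : List Bool, s.length < n → δ ≤ ‖h (s ++ [false]) - h (s ++ [true])‖) :
    (n : ℝ) * (δ^2/4) ≤ R^2 := by
  have hR : 0 ≤ R := le_trans (norm_nonneg _) (hbound [] (Nat.zero_le n))
  set K : List Bool → ℝ := fun t => ‖h t.reverse‖^2 with hK
  set S : ℕ → ℝ := fun k => ∑ v : Fin k → Bool, K (List.ofFn v) with hS
  -- per node estimate
  have hnode : ∀ l : List Bool, l.length < n →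
      2 * K l + δ^2/2 ≤ K (false :: l) + K (true :: l) := by
    intro l hl
    set s := l.reverse with hs
    have hslen : s.length < n := by simpa [hs] using hl
    have hrev : ∀ b : Bool, (b :: l).reverse = s ++ [b] := fun b => List.reverse_cons ..
    have e0 : K (false :: l) = ‖h (s ++ [false])‖^2 := by rw [hK]; simp [hrev]
    have e1 : K (true :: l) = ‖h (s ++ [true])‖^2 := by rw [hK]; simp [hrev]
    have eK : K l = ‖h s‖^2 := rfl
    set a := h (s ++ [false])
    set b := h (s ++ [true])
    have hpar := parallelogram_law_with_norm ℝ a b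
    have hab : ‖a + b‖ = 2 * ‖h s‖ := by
      rw [hmid s hslen, norm_smul]
      simp
    have hsep' : δ ≤ ‖a - b‖ := hsep s hslen
    have h2 : δ^2 ≤ ‖a - b‖^2 := by nlinarith [norm_nonneg (a - b)]
    have hpar2 : ‖a + b‖^2 + ‖a - b‖^2 = 2*(‖a‖^2 + ‖b‖^2) := by
      exact hpar
    have hab2 : ‖a + b‖^2 = 4 * ‖h s‖^2 := by rw [hab]; ring
    rw [e0, e1, eK]
    linarith
  -- sum recursion
  have hsplit : ∀ k : ℕ,
      S (k+1) = ∑ v : Fin k → Bool, (K (false :: List.ofFn v) + K (true :: List.ofFn v)) := by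
    intro k
    have h1 : S (k+1) = ∑ p : Bool × (Fin k → Bool), K (List.ofFn (Fin.cons p.1 p.2)) := by
      rw [hS]
      exact (Fintype.sum_equiv (Fin.consEquiv fun _ : Fin (k+1) => Bool)
        (fun p => K (List.ofFn (Fin.cons p.1 p.2)))
        (fun v => K (List.ofFn v)) (fun p => rfl)).symm
    have hcons : ∀ (b : Bool) (v : Fin k → Bool),
        List.ofFn (Fin.cons b v : Fin (k+1) → Bool) = b :: List.ofFn v := by
      intro b v
      simp [List.ofFn_succ, Fin.cons_zero, Fin.cons_succ]
    rw [h1, Fintype.sum_prod_type]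
    rw [Fintype.sum_bool]
    simp_rw [hcons]
    rw [← Finset.sum_add_distrib]
    exact Finset.sum_congr rfl fun v _ => by ring
  have hcard : ∀ k : ℕ, (Fintype.card (Fin k → Bool) : ℝ) = 2^k := by
    intro k; simp [Fintype.card_fun]
  have hrec : ∀ k : ℕ, k < n → 2 * S k + 2^k * (δ^2/2) ≤ S (k+1) := by
    intro k hk
    rw [hsplit k]
    have hterm : ∀ v : Fin k → Bool,
        2 * K (List.ofFn v) + δ^2/2 ≤ K (false :: List.ofFn v) + K (true :: List.ofFn v) := by
      intro v
      exact hnode (List.ofFn v) (by simpa using hk)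
    have hsum_eq : ∑ v : Fin k → Bool, (2 * K (List.ofFn v) + δ^2/2)
        = 2 * S k + 2^k * (δ^2/2) := by
      rw [Finset.sum_add_distrib, ← Finset.mul_sum, Finset.sum_const, Finset.card_univ,
        nsmul_eq_mul, hS]
      simp only [Fintype.card_fun, Fintype.card_bool, Fintype.card_fin]
      push_cast
      ring
    calc 2 * S k + 2^k * (δ^2/2)
        = ∑ v : Fin k → Bool, (2 * K (List.ofFn v) + δ^2/2) := hsum_eq.symm
      _ ≤ _ := Finset.sum_le_sum fun v _ => hterm v
  -- lower bound by induction
  have hlow : ∀ k : ℕ, k ≤ n → 2^k * ((k:ℝ) * (δ^2/4)) ≤ S k := by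
    intro k
    induction k with
    | zero =>
      intro _
      rw [hS]
      simp only [Nat.cast_zero]
      have : (0:ℝ) ≤ ∑ v : Fin 0 → Bool, K (List.ofFn v) :=
        Finset.sum_nonneg fun v _ => sq_nonneg _
      simpa using this
    | succ k ih =>
      intro hk1
      have hk : k < n := hk1
      have h1 := hrec k hk
      have h2 := ih (le_of_lt hk)
      have key : (2:ℝ)^(k+1) * (((k:ℝ)+1) * (δ^2/4))
          = 2 * (2^k * ((k:ℝ) * (δ^2/4))) + 2^k * (δ^2/2) := by ring
      have h3 : (2:ℝ)^(k+1) * (((k:ℝ)+1) * (δ^2/4)) ≤ 2 * S k + 2^k * (δ^2/2) := by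
        rw [key]; linarith
      push_cast
      linarith
  -- upper bound
  have hup : S n ≤ 2^n * R^2 := by
    rw [hS]
    calc ∑ v : Fin n → Bool, K (List.ofFn v) ≤ ∑ _v : Fin n → Bool, R^2 := by
          refine Finset.sum_le_sum fun v _ => ?_
          have hlen : (List.ofFn v).reverse.length ≤ n := by simp
          have := hbound _ hlen
          have h0 : (0:ℝ) ≤ ‖h (List.ofFn v).reverse‖ := norm_nonneg _
          have hKv : K (List.ofFn v) = ‖h (List.ofFn v).reverse‖^2 := rfl
          rw [hKv]
          nlinarith
      _ = 2^n * R^2 := by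
          rw [Finset.sum_const]
          simp only [Finset.card_univ]
          rw [nsmul_eq_mul]
          push_cast [Fintype.card_fun]
          norm_num
  have hfin := (hlow n le_rfl).trans hup
  have hpow : (0:ℝ) < 2^n := by positivity
  exact (mul_le_mul_iff_right₀ hpow).mp hfin

set_option maxHeartbeats 2000000 in
/-- If `X` is a Köthe function space with order continuous norm over a finite measure
space `(Ω, Σ, ν)` (presented by a continuous injective lattice embedding `j : X → L¹(ν)`
with solid range containing `L∞(ν)`), then the inclusion operator `i : L∞(ν) → X` is
super weakly compact. -/
theorem stmt16 {Ω : Type*} [MeasurableSpace Ω] (ν : Measure Ω) [IsFiniteMeasure ν]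
    {X : Type*} [NormedAddCommGroup X] [Lattice X] [IsOrderedAddMonoid X] [HasSolidNorm X] [NormedSpace ℝ X] [CompleteSpace X]
    (j : X →L[ℝ] Lp ℝ 1 ν) (hjinj : Function.Injective j)
    (hjlat : ∀ x y : X, j (x ⊔ y) = j x ⊔ j y)
    (hsolid : ∀ (f : Lp ℝ 1 ν) (x : X), |f| ≤ |j x| → ∃ z : X, j z = f ∧ ‖z‖ ≤ ‖x‖)
    (horder : ∀ u : ℕ → X, Antitone u → IsGLB (Set.range u) 0 →
      Tendsto (fun n => ‖u n‖) atTop (𝓝 0))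
    (i : Lp ℝ ⊤ ν →L[ℝ] X)
    (hi : ∀ g : Lp ℝ ⊤ ν, (j (i g) : Ω →ₘ[ν] ℝ) = (g : Ω →ₘ[ν] ℝ)) :
    SuperWeaklyCompactOperator i := by
  classical
  constructor
  · exact i.lipschitz.isBounded_image Metric.isBounded_closedBall
  intro ε hε
  have hcoe : ∀ g : Lp ℝ ⊤ ν, ⇑(j (i g)) = ⇑g := by
    intro g
    calc ⇑(j (i g)) = ⇑((j (i g) : Ω →ₘ[ν] ℝ)) := rfl
      _ = ⇑((g : Ω →ₘ[ν] ℝ)) := by rw [hi g]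
      _ = ⇑g := rfl
  by_cases hM0 : (ν Set.univ).toReal = 0
  -- degenerate case : zero measure
  · refine ⟨1, ?_⟩
    rintro ⟨xt, hmem, hrel⟩
    obtain ⟨-, hsep⟩ := hrel [] (by norm_num)
    have hν : ν = 0 := by
      have hfin := measure_ne_top ν Set.univ
      have h0 : ν Set.univ = 0 := by
        rcases (ENNReal.toReal_eq_zero_iff _).mp hM0 with h | h
        · exact h
        · exact absurd h hfin
      exact Measure.measure_univ_eq_zero.mp h0
    subst hν
    have hjd : j (xt [false] - xt [true]) = 0 := by
      apply Lp.ext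
      simp [Filter.EventuallyEq, MeasureTheory.ae_zero]
    have hd0 : xt [false] - xt [true] = 0 := hjinj (by rw [hjd, map_zero])
    simp only [List.nil_append] at hsep
    rw [hd0, norm_zero] at hsep
    exact absurd hsep (not_le.mpr hε)
  -- main case
  · set M := (ν Set.univ).toReal with hMdef
    have hMpos : 0 < M := lt_of_le_of_ne ENNReal.toReal_nonneg (Ne.symm hM0)
    have hRpos : 0 < Real.sqrt M := Real.sqrt_pos.mpr hMpos
    -- the constant 2 function
    set c : X := i (Lp.const ⊤ ν (2:ℝ)) with hcdef
    have hjc : ⇑(j c) = ⇑(Lp.const ⊤ ν (2:ℝ)) := hcoe _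
    have hc0ae : ⇑(Lp.const ⊤ ν (2:ℝ)) =ᵐ[ν] fun _ => (2:ℝ) := Lp.coeFn_const _ _ _
    have hjc2 : ⇑(j c) =ᵐ[ν] fun _ => (2:ℝ) := by rw [hjc]; exact hc0ae
    have hc : 0 ≤ j c := by
      rw [← Lp.coeFn_nonneg]
      filter_upwards [hjc2] with ω hω
      rw [Pi.zero_apply, hω]
      norm_num
    obtain ⟨δ, hδ, hclaim⟩ := keyA j hjinj hjlat hsolid horder c hc ε hε
    set δ' : ℝ := δ / Real.sqrt M with hδ'def
    have hδ'pos : 0 < δ' := div_pos hδ hRpos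
    set n : ℕ := ⌈4 * M / δ'^2⌉₊ + 1 with hndef
    refine ⟨n, ?_⟩
    rintro ⟨xt, hmem, hrel⟩
    -- choose L∞ representatives
    have hGex : ∀ s : List Bool, ∃ g : Lp ℝ ⊤ ν, s.length ≤ n → (‖g‖ ≤ 1 ∧ i g = xt s) := by
      intro s
      by_cases hs : s.length ≤ n
      · obtain ⟨g, hg, hgi⟩ := hmem s hs
        exact ⟨g, fun _ => ⟨mem_closedBall_zero_iff.mp hg, hgi⟩⟩
      · exact ⟨0, fun h => absurd h hs⟩
    choose G hG using hGex
    have hjxt : ∀ s : List Bool, s.length ≤ n → ⇑(j (xt s)) = ⇑(G s) := by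
      intro s hs
      rw [← (hG s hs).2]
      exact hcoe (G s)
    -- a.e. bound by 1
    have hGb : ∀ s : List Bool, s.length ≤ n → ∀ᵐ ω ∂ν, ‖(G s) ω‖ ≤ 1 := by
      intro s hs
      have h1 : eLpNorm ⇑(G s) ⊤ ν ≤ 1 := by
        have h2 : (eLpNorm ⇑(G s) ⊤ ν).toReal ≤ 1 := by
          rw [← Lp.norm_def]; exact (hG s hs).1
        have h3 := (ENNReal.le_ofReal_iff_toReal_le (Lp.eLpNorm_ne_top (G s))
          zero_le_one).mpr h2
        simpa using h3
      rw [eLpNorm_exponent_top] at h1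
      filter_upwards [ae_le_eLpNormEssSup (f := ⇑(G s)) (μ := ν)] with ω hω
      have h3 : (‖(G s) ω‖₊ : ℝ≥0∞) ≤ 1 := le_trans hω h1
      rw [ENNReal.coe_le_one_iff] at h3
      rw [← coe_nnnorm]
      exact_mod_cast h3
    -- L² elements
    have hmem2 : ∀ s : List Bool, MemLp ⇑(G s) 2 ν :=
      fun s => (Lp.memLp (G s)).mono_exponent le_top
    set H : List Bool → Lp ℝ 2 ν := fun s => (hmem2 s).toLp ⇑(G s) with hHdef
    have hHae : ∀ s, ⇑(H s) =ᵐ[ν] ⇑(G s) := fun s => MemLp.coeFn_toLp _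
    -- norm bound in L²
    have hbound : ∀ s : List Bool, s.length ≤ n → ‖H s‖ ≤ Real.sqrt M := by
      intro s hs
      rw [hHdef]
      simp only
      rw [Lp.norm_toLp]
      have h1 : eLpNorm ⇑(G s) 2 ν ≤ ν Set.univ ^ ((2:ℝ≥0∞).toReal)⁻¹ * ENNReal.ofReal 1 :=
        eLpNorm_le_of_ae_bound (hGb s hs)
      have h2 : ν Set.univ ^ ((2:ℝ≥0∞).toReal)⁻¹ * ENNReal.ofReal 1
          = ν Set.univ ^ ((2:ℝ)⁻¹) := by
        rw [ENNReal.ofReal_one, mul_one]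
        norm_num
      rw [h2] at h1
      have h3 := ENNReal.toReal_mono
        (ENNReal.rpow_ne_top_of_nonneg (by norm_num) (measure_ne_top ν _)) h1
      refine h3.trans ?_
      rw [← ENNReal.toReal_rpow, Real.sqrt_eq_rpow]
      norm_num
      exact le_rfl
    -- midpoint relation in L²
    have hmid : ∀ s : List Bool, s.length < n →
        H (s ++ [false]) + H (s ++ [true]) = (2:ℝ) • H s := by
      intro s hs
      have hsn : s.length ≤ n := le_of_lt hs
      have hs0 : (s ++ [false]).length ≤ n := by simp; omega
      have hs1 : (s ++ [true]).length ≤ n := by simp; omega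
      have hxrel := (hrel s hs).1
      have hjrel : j (xt s)
          = (2:ℝ)⁻¹ • (j (xt (s ++ [false])) + j (xt (s ++ [true]))) := by
        rw [hxrel, _root_.map_smul, map_add]
      have hae : ∀ᵐ ω ∂ν, G s ω = (2:ℝ)⁻¹ * (G (s ++ [false]) ω + G (s ++ [true]) ω) := by
        have h1 : ⇑(j (xt s))
            =ᵐ[ν] fun ω => (2:ℝ)⁻¹ • ((j (xt (s ++ [false]))) ω + (j (xt (s ++ [true]))) ω) := by
          rw [hjrel]
          filter_upwards [Lp.coeFn_smul ((2:ℝ)⁻¹) (j (xt (s ++ [false])) + j (xt (s ++ [true]))),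
            Lp.coeFn_add (j (xt (s ++ [false]))) (j (xt (s ++ [true])))] with ω ha hb
          rw [ha, Pi.smul_apply, hb, Pi.add_apply]
        filter_upwards [h1] with ω hω
        rw [← hjxt s hsn, hω, hjxt _ hs0, hjxt _ hs1]
        simp [smul_eq_mul]
      apply Lp.ext
      filter_upwards [Lp.coeFn_add (H (s ++ [false])) (H (s ++ [true])),
        Lp.coeFn_smul (2:ℝ) (H s), hHae s, hHae (s ++ [false]), hHae (s ++ [true]), hae]
        with ω h1 h2 h3 h4 h5 h6
      rw [h1, h2, Pi.add_apply, Pi.smul_apply, h4, h5, h3, h6]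
      ring_nf
    -- separation in L²
    have hsep : ∀ s : List Bool, s.length < n →
        δ' ≤ ‖H (s ++ [false]) - H (s ++ [true])‖ := by
      intro s hs
      have hs0 : (s ++ [false]).length ≤ n := by simp; omega
      have hs1 : (s ++ [true]).length ≤ n := by simp; omega
      set d : X := xt (s ++ [false]) - xt (s ++ [true]) with hddef
      have hd1 : ε ≤ ‖d‖ := (hrel s hs).2
      have hjdcoe : ⇑(j d) =ᵐ[ν] fun ω => G (s ++ [false]) ω - G (s ++ [true]) ω := by
        rw [hddef, map_sub]
        filter_upwards [Lp.coeFn_sub (j (xt (s ++ [false]))) (j (xt (s ++ [true])))] with ω h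
        rw [h, Pi.sub_apply, hjxt _ hs0, hjxt _ hs1]
      have habs : |j d| ≤ j c := by
        rw [← Lp.coeFn_le]
        filter_upwards [Lp.coeFn_abs (j d), hjdcoe, hGb _ hs0, hGb _ hs1, hjc2]
          with ω h1 h2 h3 h4 h5
        rw [h1, h2, h5]
        rw [Real.norm_eq_abs] at h3 h4
        calc |G (s ++ [false]) ω - G (s ++ [true]) ω|
            ≤ |G (s ++ [false]) ω| + |G (s ++ [true]) ω| := abs_sub _ _
          _ ≤ 2 := by linarith
      have hδd : δ ≤ ‖j d‖ := hclaim d habs hd1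
      have h2 : eLpNorm ⇑(j d) 1 ν = eLpNorm ⇑(H (s ++ [false]) - H (s ++ [true])) 1 ν := by
        refine eLpNorm_congr_ae ?_
        filter_upwards [hjdcoe, Lp.coeFn_sub (H (s ++ [false])) (H (s ++ [true])),
          hHae (s ++ [false]), hHae (s ++ [true])] with ω h1 h2 h3 h4
        rw [h1, h2, Pi.sub_apply, h3, h4]
      have h3 : eLpNorm ⇑(H (s ++ [false]) - H (s ++ [true])) 1 ν
          ≤ eLpNorm ⇑(H (s ++ [false]) - H (s ++ [true])) 2 ν
            * ν Set.univ ^ ((1:ℝ)/(1:ℝ≥0∞).toReal - 1/(2:ℝ≥0∞).toReal) :=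
        eLpNorm_le_eLpNorm_mul_rpow_measure_univ (by norm_num)
          (Lp.aestronglyMeasurable _)
      have hfin1 : eLpNorm ⇑(H (s ++ [false]) - H (s ++ [true])) 2 ν ≠ ⊤ :=
        Lp.eLpNorm_ne_top _
      have hfin2 : ν Set.univ ^ ((1:ℝ)/(1:ℝ≥0∞).toReal - 1/(2:ℝ≥0∞).toReal) ≠ ⊤ :=
        ENNReal.rpow_ne_top_of_nonneg (by norm_num) (measure_ne_top ν _)
      have h4 : ‖j d‖ ≤ ‖H (s ++ [false]) - H (s ++ [true])‖
          * (ν Set.univ ^ ((1:ℝ)/(1:ℝ≥0∞).toReal - 1/(2:ℝ≥0∞).toReal)).toReal := by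
        rw [Lp.norm_def, h2]
        have := ENNReal.toReal_mono (ENNReal.mul_ne_top hfin1 hfin2) h3
        rw [ENNReal.toReal_mul] at this
        rw [Lp.norm_def]
        exact this
      have h5 : (ν Set.univ ^ ((1:ℝ)/(1:ℝ≥0∞).toReal - 1/(2:ℝ≥0∞).toReal)).toReal
          = Real.sqrt M := by
        rw [← ENNReal.toReal_rpow, Real.sqrt_eq_rpow]
        norm_num
        rfl
      rw [h5] at h4
      rw [hδ'def, div_le_iff₀ hRpos]
      linarith
    -- apply the tree bound
    have htree := treeBound n (Real.sqrt M) δ' hδ'pos.le H hbound hmid hsep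
    have hsq : Real.sqrt M ^ 2 = M := Real.sq_sqrt hMpos.le
    rw [hsq] at htree
    have hδ'2 : 0 < δ'^2 := by positivity
    have hn' : 4 * M / δ'^2 < (n:ℝ) := by
      have h := Nat.le_ceil (4 * M / δ'^2)
      rw [hndef]
      push_cast
      linarith
    rw [div_lt_iff₀ hδ'2] at hn'
    nlinarith
end
end
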